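/- arXiv:1806.08003 — 6 statements merged into one kernel-verified Lean document; each statement's English description precedes it below -/
import Mathlib

section
/- For every restricted root λ ∈ Σ and every nonzero X ∈ 𝔤_λ, the subspace [𝔪, X] := {[Z, X] : Z ∈ 𝔪} (more precisely, its linear span) equals the β_σ-orthogonal complement of X inside 𝔤_λ, i.e. [𝔪, X] = {Y ∈ 𝔤_λ : β_σ(X, Y) = 0}. In particular, 𝔤_λ decomposes as the direct sum 𝔤_λ = ℝ·X ⊕ [𝔪, X]. -/
/-- The restricted root space `𝔤_λ = {X ∈ 𝔤 : [H, X] = λ(H) • X for all H ∈ 𝔞}`. -/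
def rootSpace' {𝔤 : Type} [LieRing 𝔤] [LieAlgebra ℝ 𝔤]
    (𝔞 : LieSubalgebra ℝ 𝔤) (lam : Module.Dual ℝ 𝔞) : Submodule ℝ 𝔤 where
  carrier := {X | ∀ H : 𝔞, ⁅(H : 𝔤), X⁆ = lam H • X}
  add_mem' := fun {a b} ha hb H => by rw [lie_add, ha H, hb H, smul_add]
  zero_mem' := fun H => by simp
  smul_mem' := fun t X hX H => by rw [lie_smul, hX H, smul_comm]

/-- The subspace `𝔪 = {Z ∈ 𝔨 : [H, Z] = 0 for all H ∈ 𝔞}`, where `𝔨` is the fixed-point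
set of the Cartan involution `σ`. -/
def mSub {𝔤 : Type} [LieRing 𝔤] [LieAlgebra ℝ 𝔤]
    (σ : 𝔤 →ₗ⁅ℝ⁆ 𝔤) (𝔞 : LieSubalgebra ℝ 𝔤) : Submodule ℝ 𝔤 where
  carrier := {Z | σ Z = Z ∧ ∀ H : 𝔞, ⁅(H : 𝔤), Z⁆ = 0}
  add_mem' := fun {a b} ha hb =>
    ⟨by rw [map_add, ha.1, hb.1], fun H => by rw [lie_add, ha.2 H, hb.2 H, add_zero]⟩
  zero_mem' := ⟨σ.map_zero, fun H => lie_zero _⟩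
  smul_mem' := fun t X hX =>
    ⟨by rw [map_smul, hX.1], fun H => by rw [lie_smul, hX.2 H, smul_zero]⟩

/-- For every restricted root `λ ∈ Σ` and every nonzero `X ∈ 𝔤_λ`, the linear
span of `[𝔪, X] = {[Z, X] : Z ∈ 𝔪}` equals the `β_σ`-orthogonal complement of `X` inside `𝔤_λ`,
and `𝔤_λ = ℝ·X ⊕ [𝔪, X]`. -/
theorem statement0
    (𝔤 : Type) [LieRing 𝔤] [LieAlgebra ℝ 𝔤] [Module.Finite ℝ 𝔤]
    [LieAlgebra.IsSemisimple ℝ 𝔤]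
    -- `σ` is a Cartan involution of `𝔤`:
    (σ : 𝔤 →ₗ⁅ℝ⁆ 𝔤) (hσinv : ∀ X, σ (σ X) = X)
    (hσpos : ∀ X : 𝔤, X ≠ 0 → 0 < -(killingForm ℝ 𝔤 X (σ X)))
    -- `𝔞` is a maximal abelian subalgebra contained in `𝔭 = {X : σ X = -X}`:
    (𝔞 : LieSubalgebra ℝ 𝔤)
    (h𝔞ab : ∀ X Y : 𝔤, X ∈ 𝔞 → Y ∈ 𝔞 → ⁅X, Y⁆ = 0)
    (h𝔞p : ∀ X ∈ 𝔞, σ X = -X)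
    (h𝔞max : ∀ 𝔟 : LieSubalgebra ℝ 𝔤, (∀ X Y : 𝔤, X ∈ 𝔟 → Y ∈ 𝔟 → ⁅X, Y⁆ = 0) →
      (∀ X ∈ 𝔟, σ X = -X) → 𝔞 ≤ 𝔟 → 𝔟 = 𝔞)
    -- `λ` is a restricted root and `X ∈ 𝔤_λ` is nonzero:
    (lam : Module.Dual ℝ 𝔞) (hlam : lam ≠ 0)
    (X : 𝔤) (hX : X ∈ rootSpace' 𝔞 lam) (hX0 : X ≠ 0) :
    -- the span of `[𝔪, X]` is the `β_σ`-orthogonal complement of `X` in `𝔤_λ` …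
    (Submodule.span ℝ {Y : 𝔤 | ∃ Z ∈ mSub σ 𝔞, Y = ⁅Z, X⁆} : Set 𝔤)
        = {Y : 𝔤 | Y ∈ rootSpace' 𝔞 lam ∧ -(killingForm ℝ 𝔤 X (σ Y)) = 0} ∧
    -- … and `𝔤_λ = ℝ·X ⊕ [𝔪, X]`:
    Submodule.span ℝ {X} ⊓ Submodule.span ℝ {Y : 𝔤 | ∃ Z ∈ mSub σ 𝔞, Y = ⁅Z, X⁆} = ⊥ ∧
    Submodule.span ℝ {X} ⊔ Submodule.span ℝ {Y : 𝔤 | ∃ Z ∈ mSub σ 𝔞, Y = ⁅Z, X⁆}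
        = rootSpace' 𝔞 lam := by
  classical
  -- basic properties of the Killing form
  have Bcomm : ∀ a b : 𝔤, killingForm ℝ 𝔤 a b = killingForm ℝ 𝔤 b a :=
    fun a b => LieModule.traceForm_comm ℝ 𝔤 𝔤 a b
  have Binv : ∀ a b c : 𝔤, killingForm ℝ 𝔤 ⁅a, b⁆ c = killingForm ℝ 𝔤 a ⁅b, c⁆ :=
    fun a b c => LieModule.traceForm_apply_lie_apply ℝ 𝔤 𝔤 a b c
  have Bσ : ∀ a b : 𝔤, killingForm ℝ 𝔤 (σ a) (σ b) = killingForm ℝ 𝔤 a b :=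
    fun a b => LieAlgebra.killingForm_of_equiv_apply (⟨σ, σ, hσinv, hσinv⟩ : 𝔤 ≃ₗ⁅ℝ⁆ 𝔤) a b
  -- 𝔨 ⟂ 𝔭 w.r.t. the Killing form
  have Bkp : ∀ k p : 𝔤, σ k = k → σ p = -p → killingForm ℝ 𝔤 k p = 0 := by
    intro k p hk hp
    have h := Bσ k p
    rw [hk, hp, map_neg] at h
    linarith
  -- positivity of B on 𝔭
  have Bp_pos : ∀ p : 𝔤, σ p = -p → p ≠ 0 → 0 < killingForm ℝ 𝔤 p p := by
    intro p hp h0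
    have h := hσpos p h0
    rw [hp, map_neg, neg_neg] at h
    exact h
  -- membership unfolding
  have memE : ∀ {Y : 𝔤}, Y ∈ rootSpace' 𝔞 lam ↔ ∀ H : 𝔞, ⁅(H : 𝔤), Y⁆ = lam H • Y :=
    fun {Y} => Iff.rfl
  have memM : ∀ {Z : 𝔤}, Z ∈ mSub σ 𝔞 ↔ σ Z = Z ∧ ∀ H : 𝔞, ⁅(H : 𝔤), Z⁆ = 0 :=
    fun {Z} => Iff.rfl
  -- σ is additive etc.
  have hσneg : ∀ a : 𝔤, σ (-a) = -σ a := by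
    intro a
    have h := σ.map_smul (-1 : ℝ) a
    simpa using h
  have hσsub : ∀ a b : 𝔤, σ (a - b) = σ a - σ b := by
    intro a b
    rw [sub_eq_add_neg, map_add σ, hσneg, sub_eq_add_neg]
  -- the centralizer of 𝔞 inside 𝔭 is 𝔞
  have hcent : ∀ W : 𝔤, σ W = -W → (∀ H : 𝔞, ⁅(H : 𝔤), W⁆ = 0) → W ∈ 𝔞 := by
    intro W hW hWc
    set p : Submodule ℝ 𝔤 := 𝔞.toSubmodule ⊔ Submodule.span ℝ {W} with hp
    have hmem : ∀ x ∈ p, ∃ a ∈ 𝔞, ∃ t : ℝ, x = a + t • W := by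
      intro x hx
      obtain ⟨a, ha, w, hw, rfl⟩ := Submodule.mem_sup.mp hx
      obtain ⟨t, rfl⟩ := Submodule.mem_span_singleton.mp hw
      exact ⟨a, ha, t, rfl⟩
    have hab : ∀ x y : 𝔤, x ∈ p → y ∈ p → ⁅x, y⁆ = 0 := by
      intro x y hx hy
      obtain ⟨a, ha, t, rfl⟩ := hmem x hx
      obtain ⟨a', ha', t', rfl⟩ := hmem y hy
      have h1 : ⁅a, W⁆ = 0 := hWc ⟨a, ha⟩
      have h2 : ⁅a', W⁆ = 0 := hWc ⟨a', ha'⟩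
      have h3 : ⁅W, a'⁆ = 0 := by rw [← lie_skew, h2, neg_zero]
      simp [lie_add, add_lie, lie_smul, smul_lie, h𝔞ab a a' ha ha', h1, h3]
    have hlie : ∀ {x y : 𝔤}, x ∈ p → y ∈ p → ⁅x, y⁆ ∈ p := by
      intro x y hx hy
      rw [hab x y hx hy]
      exact p.zero_mem
    let 𝔟 : LieSubalgebra ℝ 𝔤 := { p with lie_mem' := hlie }
    have h𝔟ab : ∀ x y : 𝔤, x ∈ 𝔟 → y ∈ 𝔟 → ⁅x, y⁆ = 0 := hab
    have h𝔟p : ∀ x ∈ 𝔟, σ x = -x := by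
      intro x hx
      obtain ⟨a, ha, t, rfl⟩ := hmem x hx
      rw [map_add σ, map_smul σ, hW, h𝔞p a ha]
      module
    have hle : 𝔞 ≤ 𝔟 := fun x hx => Submodule.mem_sup_left hx
    have hba := h𝔞max 𝔟 h𝔟ab h𝔟p hle
    have hWb : W ∈ 𝔟 := Submodule.mem_sup_right (Submodule.mem_span_singleton_self W)
    exact hba ▸ hWb
  -- action of 𝔞 on σ of a root vector
  have hσroot : ∀ Y : 𝔤, Y ∈ rootSpace' 𝔞 lam → ∀ H : 𝔞,
      ⁅(H : 𝔤), σ Y⁆ = -(lam H • σ Y) := by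
    intro Y hY H
    have h1 : σ ⁅σ (H : 𝔤), Y⁆ = ⁅(H : 𝔤), σ Y⁆ := by rw [LieHom.map_lie, hσinv]
    rw [← h1, h𝔞p (H : 𝔤) H.2, neg_lie, memE.mp hY H, hσneg, map_smul σ]
  -- the element S = ⁅X, σ X⁆ lies in 𝔞
  set S : 𝔤 := ⁅X, σ X⁆ with hSdef
  have hSσ : σ S = -S := by
    rw [hSdef, LieHom.map_lie, hσinv, ← lie_skew]
  have hScent : ∀ H : 𝔞, ⁅(H : 𝔤), S⁆ = 0 := by
    intro H
    rw [hSdef, leibniz_lie, memE.mp hX H, hσroot X hX H, smul_lie, lie_neg, lie_smul]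
    abel
  have hSa : S ∈ 𝔞 := hcent S hSσ hScent
  have hBXX : killingForm ℝ 𝔤 X (σ X) < 0 := by
    have := hσpos X hX0; linarith
  have hBSH : ∀ H : 𝔞, killingForm ℝ 𝔤 S (H : 𝔤) = lam H * killingForm ℝ 𝔤 X (σ X) := by
    intro H
    rw [hSdef, Binv]
    have h2 : ⁅σ X, (H : 𝔤)⁆ = lam H • σ X := by
      rw [← lie_skew, hσroot X hX H, neg_neg]
    rw [h2, map_smul, smul_eq_mul]
  have hS0 : S ≠ 0 := by
    intro h
    apply hlam
    ext H
    have hh := hBSH H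
    rw [h] at hh
    simp only [map_zero, LinearMap.zero_apply] at hh
    rcases mul_eq_zero.mp hh.symm with h1 | h2
    · simpa using h1
    · exact absurd h2 (ne_of_lt hBXX)
  have hlS : lam ⟨S, hSa⟩ < 0 := by
    have h1 : killingForm ℝ 𝔤 S S = lam ⟨S, hSa⟩ * killingForm ℝ 𝔤 X (σ X) := hBSH ⟨S, hSa⟩
    have h2 : 0 < killingForm ℝ 𝔤 S S := Bp_pos S hSσ hS0
    nlinarith
  -- the inner product space structure coming from β_σ
  letI innerI : Inner ℝ 𝔤 := ⟨fun a b => -(killingForm ℝ 𝔤 a (σ b))⟩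
  have hinner : ∀ a b : 𝔤, (inner ℝ a b : ℝ) = -(killingForm ℝ 𝔤 a (σ b)) := fun _ _ => rfl
  have hsymm : ∀ a b : 𝔤, (inner ℝ a b : ℝ) = (inner ℝ b a : ℝ) := by
    intro a b
    have h1 : killingForm ℝ 𝔤 a (σ b) = killingForm ℝ 𝔤 b (σ a) := by
      rw [← Bσ a (σ b), hσinv b, Bcomm]
    rw [hinner, hinner, h1]
  letI core : InnerProductSpace.Core ℝ 𝔤 :=
    { toInner := innerI
      conj_inner_symm := fun a b => by simpa using hsymm b a
      re_inner_nonneg := fun a => by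
        rcases eq_or_ne a 0 with rfl | h
        · simp [hinner]
        · have := hσpos a h
          simp only [RCLike.re_to_real]
          rw [hinner]
          linarith
      add_left := fun a b c => by
        simp only [hinner, map_add, LinearMap.add_apply]
        ring
      smul_left := fun a b r => by
        simp only [hinner, map_smul, LinearMap.smul_apply, smul_eq_mul, starRingEnd_apply,
          star_trivial]
        ring
      definite := fun a ha => by
        by_contra h
        have := hσpos a h
        rw [← hinner] at this
        exact absurd ha (ne_of_gt this) }
  letI : NormedAddCommGroup 𝔤 := @InnerProductSpace.Core.toNormedAddCommGroup ℝ 𝔤 _ _ _ core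
  letI : InnerProductSpace ℝ 𝔤 := InnerProductSpace.ofCore core.toCore
  -- the key vanishing lemma
  have key : ∀ Y : 𝔤, Y ∈ rootSpace' 𝔞 lam → (inner ℝ X Y : ℝ) = 0 →
      (∀ Z : 𝔤, Z ∈ mSub σ 𝔞 → (inner ℝ ⁅Z, X⁆ Y : ℝ) = 0) → Y = 0 := by
    intro Y hY hXY hZY
    set T : 𝔤 := ⁅σ X, Y⁆ with hTdef
    have hTc : ∀ H : 𝔞, ⁅(H : 𝔤), T⁆ = 0 := by
      intro H
      rw [hTdef, leibniz_lie, hσroot X hX H, memE.mp hY H, neg_lie, smul_lie, lie_smul]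
      abel
    have hTσc : ∀ H : 𝔞, ⁅(H : 𝔤), σ T⁆ = 0 := by
      intro H
      have h1 : σ ⁅σ (H : 𝔤), T⁆ = ⁅(H : 𝔤), σ T⁆ := by rw [LieHom.map_lie, hσinv]
      rw [← h1, h𝔞p (H : 𝔤) H.2, neg_lie, hTc H, neg_zero, map_zero σ]
    set Tp : 𝔤 := (2⁻¹ : ℝ) • (T - σ T) with hTpdef
    have hTpσ : σ Tp = -Tp := by
      rw [hTpdef, map_smul σ, hσsub, hσinv]
      module
    have hTpc : ∀ H : 𝔞, ⁅(H : 𝔤), Tp⁆ = 0 := by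
      intro H
      rw [hTpdef, lie_smul, lie_sub, hTc H, hTσc H, sub_zero, smul_zero]
    have hTpa : Tp ∈ 𝔞 := hcent Tp hTpσ hTpc
    have hBXσY : killingForm ℝ 𝔤 X (σ Y) = 0 := by
      have := hXY; rw [hinner] at this; linarith
    have hBTH : ∀ H : 𝔞, killingForm ℝ 𝔤 T (H : 𝔤) = 0 := by
      intro H
      rw [hTdef, Binv]
      have h2 : ⁅Y, (H : 𝔤)⁆ = -(lam H • Y) := by
        rw [← lie_skew, memE.mp hY H]
      have h3 : killingForm ℝ 𝔤 (σ X) Y = killingForm ℝ 𝔤 X (σ Y) := by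
        rw [← Bσ X (σ Y), hσinv]
      rw [h2, map_neg, map_smul, h3, hBXσY]
      simp
    have hTpz : Tp = 0 := by
      by_contra h0
      have hpos := Bp_pos Tp hTpσ h0
      have hKσ : σ (T - Tp) = T - Tp := by
        rw [hσsub, hTpσ, hTpdef]
        module
      have h4 : killingForm ℝ 𝔤 (T - Tp) Tp = 0 := Bkp _ _ hKσ hTpσ
      have h5 : killingForm ℝ 𝔤 T Tp = 0 := hBTH ⟨Tp, hTpa⟩
      rw [map_sub, LinearMap.sub_apply, h5] at h4
      linarith
    have hTσ : σ T = T := by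
      have h6 : T - σ T = 0 := by
        have h7 := hTpz
        rw [hTpdef, smul_eq_zero] at h7
        rcases h7 with h7 | h7
        · norm_num at h7
        · exact h7
      have := sub_eq_zero.mp h6
      exact this.symm
    have hTm : T ∈ mSub σ 𝔞 := memM.mpr ⟨hTσ, hTc⟩
    have hσT : σ T = ⁅X, σ Y⁆ := by
      rw [hTdef, LieHom.map_lie, hσinv]
    have h8 : (inner ℝ T T : ℝ) = 0 := by
      have h9 := hZY T hTm
      rw [hinner, Binv, ← hσT] at h9
      rw [hinner]
      exact h9
    have hT0 : T = 0 := by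
      by_contra h
      have hgt := hσpos T h
      rw [← hinner] at hgt
      exact absurd h8 (ne_of_gt hgt)
    set U : 𝔤 := ⁅X, Y⁆ with hUdef
    have h11 : lam ⟨S, hSa⟩ • Y = -⁅σ X, U⁆ := by
      have h12 : ⁅S, Y⁆ = lam ⟨S, hSa⟩ • Y := memE.mp hY ⟨S, hSa⟩
      rw [← h12, hSdef, lie_lie, ← hTdef, hT0, lie_zero, ← hUdef, zero_sub]
    by_contra hY0
    have hYpos : (0 : ℝ) < inner ℝ Y Y := by
      rw [hinner]; exact hσpos Y hY0
    have hUnneg : (0 : ℝ) ≤ inner ℝ U U := by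
      rcases eq_or_ne U 0 with h | h
      · rw [hinner, h]; simp
      · rw [hinner]; exact le_of_lt (hσpos U h)
    have h13 : lam ⟨S, hSa⟩ * (inner ℝ Y Y : ℝ) = (inner ℝ U U : ℝ) := by
      have h14 : (inner ℝ (lam ⟨S, hSa⟩ • Y) Y : ℝ) = lam ⟨S, hSa⟩ * (inner ℝ Y Y : ℝ) := by
        rw [hinner, hinner, map_smul, LinearMap.smul_apply, smul_eq_mul]
        ring
      rw [← h14, h11, hinner, map_neg, LinearMap.neg_apply, neg_neg]
      have h15 : ⁅σ X, U⁆ = -⁅U, σ X⁆ := (lie_skew _ _).symm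
      have h16 : ⁅σ X, σ Y⁆ = σ U := (LieHom.map_lie σ X Y).symm
      rw [h15, map_neg, LinearMap.neg_apply, Binv, h16, hinner]
    have hmul : lam ⟨S, hSa⟩ * (inner ℝ Y Y : ℝ) < 0 := mul_neg_of_neg_of_pos hlS hYpos
    linarith
  -- abbreviation for the bracket set
  set MX : Set 𝔤 := {Y : 𝔤 | ∃ Z ∈ mSub σ 𝔞, Y = ⁅Z, X⁆} with hMX
  -- the span of MX lies in the root space
  have hMXE : Submodule.span ℝ MX ≤ rootSpace' 𝔞 lam := by
    rw [Submodule.span_le]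
    rintro _ ⟨Z, hZ, rfl⟩
    refine memE.mpr fun H => ?_
    rw [leibniz_lie, (memM.mp hZ).2 H, zero_lie, zero_add, memE.mp hX H, lie_smul]
  -- elements of MX are orthogonal to X
  have hperpX : ∀ Z : 𝔤, Z ∈ mSub σ 𝔞 → killingForm ℝ 𝔤 X (σ ⁅Z, X⁆) = 0 := by
    intro Z hZ
    have hZ1 : σ Z = Z := (memM.mp hZ).1
    rw [LieHom.map_lie, hZ1, ← Binv X Z (σ X)]
    have h1 : ⁅X, Z⁆ = -⁅Z, X⁆ := (lie_skew _ _).symm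
    rw [h1, map_neg, LinearMap.neg_apply, Binv, neg_eq_zero, ← hSdef]
    exact Bkp Z S hZ1 hSσ
  have hfker : ∀ v ∈ Submodule.span ℝ MX, killingForm ℝ 𝔤 X (σ v) = 0 := by
    intro v hv
    have hle : Submodule.span ℝ MX ≤
        LinearMap.ker ((killingForm ℝ 𝔤 X).comp σ.toLinearMap) := by
      rw [Submodule.span_le]
      rintro _ ⟨Z, hZ, rfl⟩
      simpa [LinearMap.mem_ker] using hperpX Z hZ
    simpa [LinearMap.mem_ker] using hle hv
  -- intersection is trivial
  have hinter : Submodule.span ℝ {X} ⊓ Submodule.span ℝ MX = ⊥ := by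
    rw [Submodule.eq_bot_iff]
    intro v hv
    obtain ⟨hv1, hv2⟩ := Submodule.mem_inf.mp hv
    obtain ⟨t, rfl⟩ := Submodule.mem_span_singleton.mp hv1
    have h1 := hfker _ hv2
    rw [map_smul σ, map_smul, smul_eq_mul] at h1
    rcases mul_eq_zero.mp h1 with h | h
    · rw [h, zero_smul]
    · exact absurd h (ne_of_lt hBXX)
  -- the sup is the root space
  have hVE : Submodule.span ℝ {X} ⊔ Submodule.span ℝ MX ≤ rootSpace' 𝔞 lam := by
    apply sup_le
    · rw [Submodule.span_le, Set.singleton_subset_iff]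
      exact hX
    · exact hMXE
  have hsup : Submodule.span ℝ {X} ⊔ Submodule.span ℝ MX = rootSpace' 𝔞 lam := by
    refine le_antisymm hVE fun Y hY => ?_
    set V : Submodule ℝ 𝔤 := Submodule.span ℝ {X} ⊔ Submodule.span ℝ MX with hV
    set P : 𝔤 := (Submodule.orthogonalProjectionOnto V Y : 𝔤) with hP
    have hPV : P ∈ V := (Submodule.orthogonalProjectionOnto V Y).2
    have hWperp : Y - P ∈ Vᗮ := Submodule.sub_starProjection_mem_orthogonal Y
    have hWE : Y - P ∈ rootSpace' 𝔞 lam := Submodule.sub_mem _ hY (hVE hPV)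
    have hW0 : Y - P = 0 := by
      apply key (Y - P) hWE
      · have hXV : X ∈ V :=
          Submodule.mem_sup_left (Submodule.mem_span_singleton_self X)
        exact (Submodule.mem_orthogonal V _).mp hWperp X hXV
      · intro Z hZ
        have hZV : ⁅Z, X⁆ ∈ V :=
          Submodule.mem_sup_right (Submodule.subset_span ⟨Z, hZ, rfl⟩)
        exact (Submodule.mem_orthogonal V _).mp hWperp _ hZV
    have hYP : Y = P := by rwa [sub_eq_zero] at hW0
    rw [hYP]
    exact hPV
  -- part 1
  have hpart1 : (Submodule.span ℝ MX : Set 𝔤)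
      = {Y : 𝔤 | Y ∈ rootSpace' 𝔞 lam ∧ -(killingForm ℝ 𝔤 X (σ Y)) = 0} := by
    ext Y
    simp only [SetLike.mem_coe, Set.mem_setOf_eq]
    constructor
    · intro hY
      exact ⟨hMXE hY, by rw [hfker Y hY, neg_zero]⟩
    · rintro ⟨hYE, hYperp⟩
      have hYV : Y ∈ Submodule.span ℝ {X} ⊔ Submodule.span ℝ MX := hsup ▸ hYE
      obtain ⟨u, hu, w, hw, rfl⟩ := Submodule.mem_sup.mp hYV
      obtain ⟨t, rfl⟩ := Submodule.mem_span_singleton.mp hu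
      have h1 : killingForm ℝ 𝔤 X (σ (t • X + w)) = 0 := by linarith
      rw [map_add σ, map_add, map_smul σ, map_smul, hfker w hw, add_zero, smul_eq_mul] at h1
      rcases mul_eq_zero.mp h1 with h | h
      · rw [h, zero_smul, zero_add]
        exact hw
      · exact absurd h (ne_of_lt hBXX)
  exact ⟨hpart1, hinter, hsup⟩
end

section
/- If λ ∈ Σ is a restricted root with dim 𝔤_λ = 1, then [Z, X] = 0 for every Z ∈ 𝔪 and X ∈ 𝔤_λ. Moreover, if 𝔪 = 0, then every restricted root space 𝔤_λ (λ ∈ Σ) is one-dimensional. -/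
open Module LieAlgebra

section Aux

variable {𝔤 : Type} [LieRing 𝔤] [LieAlgebra ℝ 𝔤]

/-- σ-invariance of the Killing form. -/
lemma killing_sigma [Module.Finite ℝ 𝔤] (σ : 𝔤 →ₗ⁅ℝ⁆ 𝔤) (hσinv : ∀ X, σ (σ X) = X) (a b : 𝔤) :
    killingForm ℝ 𝔤 (σ a) (σ b) = killingForm ℝ 𝔤 a b := by
  have hσσ : (σ : 𝔤 →ₗ[ℝ] 𝔤) ∘ₗ (σ : 𝔤 →ₗ[ℝ] 𝔤) = LinearMap.id := by
    ext v; simp [hσinv v]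
  have had : ∀ x : 𝔤, ad ℝ 𝔤 (σ x) = (σ : 𝔤 →ₗ[ℝ] 𝔤) ∘ₗ ad ℝ 𝔤 x ∘ₗ (σ : 𝔤 →ₗ[ℝ] 𝔤) := by
    intro x; ext v
    have : ⁅σ x, v⁆ = ⁅σ x, σ (σ v)⁆ := by rw [hσinv]
    simp only [ad_apply, LinearMap.comp_apply, LieHom.coe_toLinearMap]
    rw [this, ← σ.map_lie]
  rw [killingForm_apply_apply, killingForm_apply_apply, had, had]
  have : ((σ : 𝔤 →ₗ[ℝ] 𝔤) ∘ₗ ad ℝ 𝔤 a ∘ₗ (σ : 𝔤 →ₗ[ℝ] 𝔤)) ∘ₗ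
      ((σ : 𝔤 →ₗ[ℝ] 𝔤) ∘ₗ ad ℝ 𝔤 b ∘ₗ (σ : 𝔤 →ₗ[ℝ] 𝔤)) =
      (σ : 𝔤 →ₗ[ℝ] 𝔤) ∘ₗ (ad ℝ 𝔤 a ∘ₗ ad ℝ 𝔤 b) ∘ₗ (σ : 𝔤 →ₗ[ℝ] 𝔤) := by
    simp only [← LinearMap.comp_assoc]
    congr 2
    simp only [LinearMap.comp_assoc, hσσ, LinearMap.comp_id]
  rw [this]
  calc LinearMap.trace ℝ 𝔤 ((σ : 𝔤 →ₗ[ℝ] 𝔤) ∘ₗ (ad ℝ 𝔤 a ∘ₗ ad ℝ 𝔤 b) ∘ₗ (σ : 𝔤 →ₗ[ℝ] 𝔤))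
      = LinearMap.trace ℝ 𝔤 (((ad ℝ 𝔤 a ∘ₗ ad ℝ 𝔤 b) ∘ₗ (σ : 𝔤 →ₗ[ℝ] 𝔤)) ∘ₗ (σ : 𝔤 →ₗ[ℝ] 𝔤)) := by
        rw [LinearMap.trace_comp_comm']
    _ = LinearMap.trace ℝ 𝔤 (ad ℝ 𝔤 a ∘ₗ ad ℝ 𝔤 b) := by
        rw [LinearMap.comp_assoc, hσσ, LinearMap.comp_id]

/-- If `𝔪 = 0` then the centralizer of `𝔞` is contained in `𝔞`. -/
lemma central_mem (σ : 𝔤 →ₗ⁅ℝ⁆ 𝔤) (hσinv : ∀ X, σ (σ X) = X)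
    (𝔞 : LieSubalgebra ℝ 𝔤)
    (h𝔞ab : ∀ X Y : 𝔤, X ∈ 𝔞 → Y ∈ 𝔞 → ⁅X, Y⁆ = 0)
    (h𝔞p : ∀ X ∈ 𝔞, σ X = -X)
    (h𝔞max : ∀ 𝔟 : LieSubalgebra ℝ 𝔤, (∀ X Y : 𝔤, X ∈ 𝔟 → Y ∈ 𝔟 → ⁅X, Y⁆ = 0) →
      (∀ X ∈ 𝔟, σ X = -X) → 𝔞 ≤ 𝔟 → 𝔟 = 𝔞)
    (hm : mSub σ 𝔞 = ⊥)
    (Z : 𝔤) (hZ : ∀ H : 𝔞, ⁅(H : 𝔤), Z⁆ = 0) : Z ∈ 𝔞 := by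
  have hσZ : ∀ H : 𝔞, ⁅(H : 𝔤), σ Z⁆ = 0 := by
    intro H
    have h1 : σ ⁅((H : 𝔤)), Z⁆ = ⁅σ (H : 𝔤), σ Z⁆ := σ.map_lie _ _
    rw [hZ H, map_zero, h𝔞p _ H.2, neg_lie] at h1
    exact (neg_eq_zero.mp h1.symm)
  have hk : Z + σ Z ∈ mSub σ 𝔞 := by
    refine ⟨by rw [map_add, hσinv, add_comm], fun H => by rw [lie_add, hZ H, hσZ H, add_zero]⟩
  rw [hm, Submodule.mem_bot] at hk
  have hσZ' : σ Z = -Z := by linear_combination (norm := module) hk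
  by_cases hZ0 : Z = 0
  · rw [hZ0]; exact 𝔞.zero_mem
  have habmem : ∀ x ∈ (𝔞.toSubmodule ⊔ (ℝ ∙ Z) : Submodule ℝ 𝔤),
      ∃ (a : 𝔤) (t : ℝ), a ∈ 𝔞 ∧ x = a + t • Z := by
    intro x hx
    rcases Submodule.mem_sup.mp hx with ⟨a, ha, z, hz, rfl⟩
    rcases Submodule.mem_span_singleton.mp hz with ⟨t, rfl⟩
    exact ⟨a, t, ha, rfl⟩
  have hbrack : ∀ x y : 𝔤, x ∈ (𝔞.toSubmodule ⊔ (ℝ ∙ Z) : Submodule ℝ 𝔤) →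
      y ∈ (𝔞.toSubmodule ⊔ (ℝ ∙ Z) : Submodule ℝ 𝔤) → ⁅x, y⁆ = 0 := by
    intro x y hx hy
    obtain ⟨a, t, ha, rfl⟩ := habmem x hx
    obtain ⟨b, s, hb, rfl⟩ := habmem y hy
    have h1 : ⁅a, b⁆ = 0 := h𝔞ab a b ha hb
    have h2 : ⁅a, Z⁆ = 0 := hZ ⟨a, ha⟩
    have h3 : ⁅Z, b⁆ = 0 := by rw [← lie_skew, hZ ⟨b, hb⟩, neg_zero]
    have h4 : ⁅Z, Z⁆ = 0 := lie_self Z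
    simp only [lie_add, add_lie, lie_smul, smul_lie, h1, h2, h3, h4, smul_zero,
      add_zero, zero_add]
  let 𝔟 : LieSubalgebra ℝ 𝔤 :=
    { toSubmodule := 𝔞.toSubmodule ⊔ (ℝ ∙ Z)
      lie_mem' := fun {x y} hx hy => by
        rw [hbrack x y hx hy]; exact Submodule.zero_mem _ }
  have hb𝔟 : ∀ X ∈ 𝔟, σ X = -X := by
    intro x hx
    obtain ⟨a, t, ha, rfl⟩ := habmem x hx
    rw [map_add, map_smul, h𝔞p a ha, hσZ', smul_neg, neg_add]
  have h𝔞le : 𝔞 ≤ 𝔟 := fun x hx => Submodule.mem_sup_left hx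
  have h𝔟𝔞 := h𝔞max 𝔟 hbrack hb𝔟 h𝔞le
  have hZ𝔟 : Z ∈ 𝔟 := Submodule.mem_sup_right (Submodule.mem_span_singleton_self Z)
  rw [h𝔟𝔞] at hZ𝔟
  exact hZ𝔟

/-- The chain `Y, [X,Y], [X,[X,Y]], …`. -/
def chain (X Y : 𝔤) : ℕ → 𝔤
  | 0 => Y
  | (n+1) => ⁅X, chain X Y n⁆

end Aux

/-- The scalar sequence `rseq t n = t·n(n+1)/2`. -/
def rseq (t : ℝ) : ℕ → ℝ
  | 0 => 0
  | (n+1) => rseq t n + ((n : ℝ) + 1) * t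

lemma rseq_nonneg (t : ℝ) (ht : 0 < t) : ∀ n, 0 ≤ rseq t n
  | 0 => le_refl 0
  | (n+1) => by
      have := rseq_nonneg t ht n
      have h2 : (0:ℝ) < ((n:ℝ)+1) * t := by positivity
      simp only [rseq]; linarith

lemma rseq_pos (t : ℝ) (ht : 0 < t) (n : ℕ) : 0 < rseq t (n+1) := by
  have := rseq_nonneg t ht n
  have h2 : (0:ℝ) < ((n:ℝ)+1) * t := by positivity
  simp only [rseq]; linarith

/-- Key lemma: if `𝔪 = 0`, `X ∈ 𝔤_λ` nonzero, and `Y ∈ 𝔤_λ` is Killing-orthogonal to `σ X`,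
then `Y = 0`. -/
lemma key_lemma {𝔤 : Type} [LieRing 𝔤] [LieAlgebra ℝ 𝔤] [Module.Finite ℝ 𝔤]
    (σ : 𝔤 →ₗ⁅ℝ⁆ 𝔤) (hσinv : ∀ X, σ (σ X) = X)
    (hσpos : ∀ X : 𝔤, X ≠ 0 → 0 < -(killingForm ℝ 𝔤 X (σ X)))
    (𝔞 : LieSubalgebra ℝ 𝔤)
    (h𝔞ab : ∀ X Y : 𝔤, X ∈ 𝔞 → Y ∈ 𝔞 → ⁅X, Y⁆ = 0)
    (h𝔞p : ∀ X ∈ 𝔞, σ X = -X)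
    (h𝔞max : ∀ 𝔟 : LieSubalgebra ℝ 𝔤, (∀ X Y : 𝔤, X ∈ 𝔟 → Y ∈ 𝔟 → ⁅X, Y⁆ = 0) →
      (∀ X ∈ 𝔟, σ X = -X) → 𝔞 ≤ 𝔟 → 𝔟 = 𝔞)
    (hm : mSub σ 𝔞 = ⊥)
    (lam : Module.Dual ℝ 𝔞) (hlam : lam ≠ 0)
    (X : 𝔤) (hX : X ∈ rootSpace' 𝔞 lam) (hX0 : X ≠ 0)
    (Y : 𝔤) (hY : Y ∈ rootSpace' 𝔞 lam)
    (horth : killingForm ℝ 𝔤 (σ X) Y = 0) : Y = 0 := by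
  have hX' : ∀ H : 𝔞, ⁅(H : 𝔤), X⁆ = lam H • X := hX
  have hY' : ∀ H : 𝔞, ⁅(H : 𝔤), Y⁆ = lam H • Y := hY
  set κ := killingForm ℝ 𝔤 with hκ
  -- σ X lies in the (-λ)-root space
  have hσX : ∀ H : 𝔞, ⁅(H : 𝔤), σ X⁆ = -(lam H • σ X) := by
    intro H
    have h1 : σ ⁅(H : 𝔤), X⁆ = ⁅σ (H : 𝔤), σ X⁆ := σ.map_lie _ _
    rw [hX' H, map_smul, h𝔞p _ H.2, neg_lie] at h1
    have := h1.symm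
    rw [neg_eq_iff_eq_neg] at this
    exact this.symm ▸ by rw [← this]
  -- centralizer membership for brackets [σX, U] with U in the root space
  have hcent : ∀ U : 𝔤, (∀ H : 𝔞, ⁅(H : 𝔤), U⁆ = lam H • U) →
      ∀ H : 𝔞, ⁅(H : 𝔤), ⁅σ X, U⁆⁆ = 0 := by
    intro U hU H
    rw [leibniz_lie, hσX H, hU H, neg_lie, smul_lie, lie_smul]
    abel
  -- Killing form of such brackets against 𝔞
  have hβgen : ∀ U : 𝔤, (∀ H : 𝔞, ⁅(H : 𝔤), U⁆ = lam H • U) →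
      ∀ H : 𝔞, κ ⁅σ X, U⁆ (H : 𝔤) = -(lam H * κ (σ X) U) := by
    intro U hU H
    rw [hκ, LieModule.traceForm_apply_lie_apply]
    have : ⁅U, (H : 𝔤)⁆ = -(lam H • U) := by rw [← lie_skew, hU H]
    rw [this]
    simp [mul_comm]
  have hc : 0 < -(κ X (σ X)) := hσpos X hX0
  set c : ℝ := -(κ X (σ X)) with hcdef
  have hcomm : κ (σ X) X = κ X (σ X) := LieModule.traceForm_comm ℝ 𝔤 𝔤 (σ X) X
  -- W = [σX, X] ∈ 𝔞
  set W : 𝔤 := ⁅σ X, X⁆ with hWdef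
  have hW𝔞 : W ∈ 𝔞 := central_mem σ hσinv 𝔞 h𝔞ab h𝔞p h𝔞max hm W (hcent X hX')
  have hβW : ∀ H : 𝔞, κ W (H : 𝔤) = lam H * c := by
    intro H
    rw [hWdef, hβgen X hX' H, hcomm, hcdef]; ring
  have hσW : σ W = -W := h𝔞p W hW𝔞
  have hW0 : W ≠ 0 := by
    intro h0
    apply hlam
    ext H
    have := hβW H
    rw [h0] at this
    simp only [map_zero, LinearMap.zero_apply] at this
    have : lam H * c = 0 := this.symm
    rcases mul_eq_zero.mp this with h | h
    · simpa using h
    · exact absurd h (by linarith)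
  set W' : 𝔞 := ⟨W, hW𝔞⟩ with hW'def
  have hlamW : 0 < lam W' := by
    have h1 : κ W W = lam W' * c := hβW W'
    have h2 : 0 < -(κ W (σ W)) := hσpos W hW0
    rw [hσW, map_neg, neg_neg] at h2
    rw [h1] at h2
    nlinarith
  -- [σX, Y] = 0
  have hFY0 : ⁅σ X, Y⁆ = 0 := by
    set V : 𝔤 := ⁅σ X, Y⁆ with hVdef
    have hV𝔞 : V ∈ 𝔞 := central_mem σ hσinv 𝔞 h𝔞ab h𝔞p h𝔞max hm V (hcent Y hY')
    have hβV : ∀ H : 𝔞, κ V (H : 𝔤) = 0 := by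
      intro H
      rw [hVdef, hβgen Y hY' H, horth]; ring
    by_contra hV0
    have h2 : 0 < -(κ V (σ V)) := hσpos V hV0
    rw [h𝔞p V hV𝔞, map_neg, neg_neg] at h2
    have h3 : κ V V = 0 := hβV ⟨V, hV𝔞⟩
    rw [h3] at h2
    exact lt_irrefl 0 h2
  -- the chain is a sequence of root vectors
  have hchain_root : ∀ n (H : 𝔞), ⁅(H : 𝔤), chain X Y n⁆ =
      (((n : ℝ) + 1) * lam H) • chain X Y n := by
    intro n
    induction n with
    | zero => intro H; rw [show chain X Y 0 = Y from rfl, hY' H]; norm_num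
    | succ n ih =>
      intro H
      rw [show chain X Y (n+1) = ⁅X, chain X Y n⁆ from rfl, leibniz_lie, hX' H, ih H,
        smul_lie, lie_smul, ← add_smul]
      congr 1
      push_cast
      ring
  have hchainW : ∀ n, ⁅W, chain X Y n⁆ = (((n : ℝ) + 1) * lam W') • chain X Y n := by
    intro n; exact hchain_root n W'
  -- the lowering relation
  have hF : ∀ n, ⁅σ X, chain X Y (n+1)⁆ = rseq (lam W') (n+1) • chain X Y n := by
    intro n
    induction n with
    | zero =>
      rw [show chain X Y 1 = ⁅X, chain X Y 0⁆ from rfl, leibniz_lie,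
        show (⁅σ X, X⁆ : 𝔤) = W from rfl, hchainW 0,
        show chain X Y 0 = Y from rfl, hFY0, lie_zero, add_zero]
      congr 1
      simp [rseq]
    | succ n ih =>
      rw [show chain X Y (n+2) = ⁅X, chain X Y (n+1)⁆ from rfl, leibniz_lie,
        show (⁅σ X, X⁆ : 𝔤) = W from rfl, hchainW (n+1), ih, lie_smul,
        show (⁅X, chain X Y n⁆ : 𝔤) = chain X Y (n+1) from rfl, ← add_smul]
      congr 1
      simp only [rseq]
      push_cast
      ring
  -- conclude
  classical
  by_contra hY0
  -- the chain must eventually vanish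
  have hex : ∃ n, chain X Y n = 0 := by
    by_contra hall
    push_neg at hall
    obtain ⟨H0, hH0⟩ : ∃ H : 𝔞, lam H ≠ 0 := by
      by_contra hno
      push_neg at hno
      exact hlam (LinearMap.ext fun H => hno H)
    have hinj : Function.Injective (fun n : ℕ => ((n : ℝ) + 1) * lam H0) := by
      intro m n h
      simp only at h
      have := mul_right_cancel₀ hH0 h
      exact_mod_cast (by linarith : (m : ℝ) = n)
    have hli : LinearIndependent ℝ (fun n : ℕ => chain X Y n) := by
      apply Module.End.eigenvectors_linearIndependent' (ad ℝ 𝔤 (H0 : 𝔤))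
        (fun n : ℕ => ((n : ℝ) + 1) * lam H0) hinj
      intro n
      refine ⟨Module.End.mem_eigenspace_iff.mpr ?_, hall n⟩
      rw [ad_apply]
      exact hchain_root n H0
    exact Module.Finite.not_linearIndependent_of_infinite _ hli
  set N := Nat.find hex with hNdef
  have hN : chain X Y N = 0 := Nat.find_spec hex
  have hN0 : N ≠ 0 := by
    intro h
    rw [h] at hN
    exact hY0 hN
  obtain ⟨M, hM⟩ : ∃ M, N = M + 1 := ⟨N - 1, by omega⟩
  have hMlt : M < N := by omega
  have hMne : chain X Y M ≠ 0 := Nat.find_min hex hMlt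
  have := hF M
  rw [← hM, hN, lie_zero] at this
  have hrpos := rseq_pos (lam W') hlamW M
  rcases smul_eq_zero.mp this.symm with h | h
  · rw [hM] at h; linarith
  · exact hMne h


/-- If `λ ∈ Σ` has `dim 𝔤_λ = 1`, then `[Z, X] = 0` for every `Z ∈ 𝔪` and
`X ∈ 𝔤_λ`.  Moreover, if `𝔪 = 0`, then every restricted root space is one-dimensional. -/
theorem statement1
    (𝔤 : Type) [LieRing 𝔤] [LieAlgebra ℝ 𝔤] [Module.Finite ℝ 𝔤]
    [LieAlgebra.IsSemisimple ℝ 𝔤]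
    -- `σ` is a Cartan involution of `𝔤`:
    (σ : 𝔤 →ₗ⁅ℝ⁆ 𝔤) (hσinv : ∀ X, σ (σ X) = X)
    (hσpos : ∀ X : 𝔤, X ≠ 0 → 0 < -(killingForm ℝ 𝔤 X (σ X)))
    -- `𝔞` is a maximal abelian subalgebra contained in `𝔭 = {X : σ X = -X}`:
    (𝔞 : LieSubalgebra ℝ 𝔤)
    (h𝔞ab : ∀ X Y : 𝔤, X ∈ 𝔞 → Y ∈ 𝔞 → ⁅X, Y⁆ = 0)
    (h𝔞p : ∀ X ∈ 𝔞, σ X = -X)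
    (h𝔞max : ∀ 𝔟 : LieSubalgebra ℝ 𝔤, (∀ X Y : 𝔤, X ∈ 𝔟 → Y ∈ 𝔟 → ⁅X, Y⁆ = 0) →
      (∀ X ∈ 𝔟, σ X = -X) → 𝔞 ≤ 𝔟 → 𝔟 = 𝔞) :
    -- if `λ ∈ Σ` with `dim 𝔤_λ = 1`, then `[𝔪, 𝔤_λ] = 0` …
    (∀ lam : Module.Dual ℝ 𝔞, lam ≠ 0 → Module.finrank ℝ (rootSpace' 𝔞 lam) = 1 →
      ∀ Z ∈ mSub σ 𝔞, ∀ X ∈ rootSpace' 𝔞 lam, ⁅Z, X⁆ = 0) ∧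
    -- … and if `𝔪 = 0`, then every restricted root space is one-dimensional:
    (mSub σ 𝔞 = ⊥ → ∀ lam : Module.Dual ℝ 𝔞, lam ≠ 0 → rootSpace' 𝔞 lam ≠ ⊥ →
      Module.finrank ℝ (rootSpace' 𝔞 lam) = 1) := by
  constructor
  · -- Part 1
    intro lam hlam hdim Z hZ X hX
    obtain ⟨hZσ, hZc⟩ := hZ
    have hX' : ∀ H : 𝔞, ⁅(H : 𝔤), X⁆ = lam H • X := hX
    by_cases hX0 : X = 0
    · rw [hX0, lie_zero]
    -- [Z, X] lies in the root space
    have hBr : ⁅Z, X⁆ ∈ rootSpace' 𝔞 lam := by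
      intro H
      rw [leibniz_lie, hZc H, zero_lie, zero_add, hX' H, lie_smul]
    -- hence [Z, X] = c • X for some scalar c
    obtain ⟨cc, hcc⟩ := exists_smul_eq_of_finrank_eq_one hdim
      (x := (⟨X, hX⟩ : rootSpace' 𝔞 lam))
      (by simpa using hX0) (⟨⁅Z, X⁆, hBr⟩ : rootSpace' 𝔞 lam)
    have hccg : ⁅Z, X⁆ = cc • X := by
      have := congrArg (Subtype.val) hcc
      simpa using this.symm
    -- skew-adjointness of ad Z forces c = 0
    have hskew : killingForm ℝ 𝔤 ⁅Z, X⁆ (σ X) = - killingForm ℝ 𝔤 X (σ ⁅Z, X⁆) := by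
      rw [LieModule.traceForm_apply_lie_apply']
      congr 1
      rw [σ.map_lie, hZσ]
    rw [hccg] at hskew
    rw [map_smul σ] at hskew
    simp only [map_smul, LinearMap.smul_apply, smul_eq_mul] at hskew
    have hκ0 : killingForm ℝ 𝔤 X (σ X) ≠ 0 := by
      have := hσpos X hX0; intro h; rw [h] at this; simp at this
    have hcc0 : cc = 0 := by
      have : cc * killingForm ℝ 𝔤 X (σ X) = -(cc * killingForm ℝ 𝔤 X (σ X)) := hskew
      have h2 : 2 * (cc * killingForm ℝ 𝔤 X (σ X)) = 0 := by linarith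
      have h3 : cc * killingForm ℝ 𝔤 X (σ X) = 0 := by linarith
      rcases mul_eq_zero.mp h3 with h | h
      · exact h
      · exact absurd h hκ0
    rw [hccg, hcc0, zero_smul]
  · -- Part 2
    intro hm lam hlam hne
    obtain ⟨X, hX, hX0⟩ := (Submodule.ne_bot_iff _).mp hne
    have hc : 0 < -(killingForm ℝ 𝔤 X (σ X)) := hσpos X hX0
    have hk0 : killingForm ℝ 𝔤 X (σ X) ≠ 0 := by
      intro h; rw [h, neg_zero] at hc; exact lt_irrefl 0 hc
    have hspan : rootSpace' 𝔞 lam = (ℝ ∙ X : Submodule ℝ 𝔤) := by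
      apply le_antisymm
      · intro Y hY
        set t : ℝ := killingForm ℝ 𝔤 (σ X) Y / killingForm ℝ 𝔤 X (σ X) with htdef
        have hZmem : Y - t • X ∈ rootSpace' 𝔞 lam :=
          Submodule.sub_mem _ hY (Submodule.smul_mem _ t hX)
        have horth : killingForm ℝ 𝔤 (σ X) (Y - t • X) = 0 := by
          have hcomm : killingForm ℝ 𝔤 (σ X) X = killingForm ℝ 𝔤 X (σ X) :=
            LieModule.traceForm_comm ℝ 𝔤 𝔤 (σ X) X
          simp only [map_sub, map_smul, smul_eq_mul, hcomm]
          rw [htdef]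
          field_simp
          ring
        have := key_lemma σ hσinv hσpos 𝔞 h𝔞ab h𝔞p h𝔞max hm lam hlam X hX hX0
          (Y - t • X) hZmem horth
        have hYe : Y = t • X := by linear_combination (norm := module) this
        rw [hYe]
        exact Submodule.smul_mem _ t (Submodule.mem_span_singleton_self X)
      · rw [Submodule.span_le, Set.singleton_subset_iff]
        exact hX
    rw [hspan]
    exact finrank_span_singleton hX0
end

section
/- A Chevalley–Eilenberg 2-cocycle c : 𝔰 × 𝔰 → ℂ (for the trivial representation of 𝔰 on ℂ) is a Chevalley–Eilenberg 2-coboundary if and only if c vanishes on 𝔞 × 𝔞, i.e. c(H, H') = 0 for all H, H' ∈ 𝔞. -/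
/-- The set of positive restricted roots, with respect to a basis `φ` of `𝔞*` and the map
`λ ↦ H_λ` determined by the Killing form. -/
def posRootSet {𝔤 : Type} [LieRing 𝔤] [LieAlgebra ℝ 𝔤] {r : ℕ}
    (𝔞 : LieSubalgebra ℝ 𝔤) (φ : Module.Basis (Fin r) ℝ (Module.Dual ℝ 𝔞))
    (Hv : Module.Dual ℝ 𝔞 → 𝔞) : Set (Module.Dual ℝ 𝔞) :=
  {lam | lam ≠ 0 ∧ rootSpace' 𝔞 lam ≠ ⊥ ∧
    ∃ k : Fin r, 0 < φ k (Hv lam) ∧ ∀ j : Fin r, j < k → φ j (Hv lam) = 0}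

/-- The subspace `𝔫 = ⊕_{λ ∈ Σ⁺} 𝔤_λ`. -/
def nSub {𝔤 : Type} [LieRing 𝔤] [LieAlgebra ℝ 𝔤] {r : ℕ}
    (𝔞 : LieSubalgebra ℝ 𝔤) (φ : Module.Basis (Fin r) ℝ (Module.Dual ℝ 𝔞))
    (Hv : Module.Dual ℝ 𝔞 → 𝔞) : Submodule ℝ 𝔤 :=
  ⨆ lam ∈ posRootSet 𝔞 φ Hv, rootSpace' 𝔞 lam

/-- A Chevalley–Eilenberg 2-cocycle `c : 𝔰 × 𝔰 → ℂ` (trivial coefficients)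
is a 2-coboundary if and only if it vanishes on `𝔞 × 𝔞`. -/
theorem statement5
    (𝔤 : Type) [LieRing 𝔤] [LieAlgebra ℝ 𝔤] [Module.Finite ℝ 𝔤]
    [LieAlgebra.IsSemisimple ℝ 𝔤]
    -- `σ` is a Cartan involution of `𝔤`:
    (σ : 𝔤 →ₗ⁅ℝ⁆ 𝔤) (hσinv : ∀ X, σ (σ X) = X)
    (hσpos : ∀ X : 𝔤, X ≠ 0 → 0 < -(killingForm ℝ 𝔤 X (σ X)))
    -- `𝔞` is a maximal abelian subalgebra contained in `𝔭 = {X : σ X = -X}`: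
    (𝔞 : LieSubalgebra ℝ 𝔤)
    (h𝔞ab : ∀ X Y : 𝔤, X ∈ 𝔞 → Y ∈ 𝔞 → ⁅X, Y⁆ = 0)
    (h𝔞p : ∀ X ∈ 𝔞, σ X = -X)
    (h𝔞max : ∀ 𝔟 : LieSubalgebra ℝ 𝔤, (∀ X Y : 𝔤, X ∈ 𝔟 → Y ∈ 𝔟 → ⁅X, Y⁆ = 0) →
      (∀ X ∈ 𝔟, σ X = -X) → 𝔞 ≤ 𝔟 → 𝔟 = 𝔞)
    -- `φ` is a basis of `𝔞*` and `Hv lam = H_λ` is determined by the Killing form: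
    (r : ℕ) (φ : Module.Basis (Fin r) ℝ (Module.Dual ℝ 𝔞))
    (Hv : Module.Dual ℝ 𝔞 → 𝔞)
    (hHv : ∀ (lam : Module.Dual ℝ 𝔞) (H : 𝔞),
      killingForm ℝ 𝔤 (Hv lam : 𝔤) (H : 𝔤) = lam H)
    -- `𝔰` is the Iwasawa subalgebra `𝔞 ⊕ 𝔫`:
    (𝔰 : LieSubalgebra ℝ 𝔤) (h𝔰 : 𝔰.toSubmodule = 𝔞.toSubmodule ⊔ nSub 𝔞 φ Hv)
    -- `c` is a Chevalley–Eilenberg 2-cocycle on `𝔰` with trivial coefficients in `ℂ`: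
    (c : 𝔰 →ₗ[ℝ] 𝔰 →ₗ[ℝ] ℂ)
    (hanti : ∀ X Y : 𝔰, c X Y = - c Y X)
    (hcocycle : ∀ X Y Z : 𝔰, c ⁅X, Y⁆ Z + c ⁅Y, Z⁆ X + c ⁅Z, X⁆ Y = 0) :
    -- `c` is a 2-coboundary iff it vanishes on `𝔞 × 𝔞`:
    (∃ α : 𝔰 →ₗ[ℝ] ℂ, ∀ X Y : 𝔰, c X Y = α ⁅X, Y⁆) ↔
      (∀ H H' : 𝔰, (H : 𝔤) ∈ 𝔞 → (H' : 𝔤) ∈ 𝔞 → c H H' = 0) := by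
  classical
  constructor
  · rintro ⟨α, hα⟩ H H' hH hH'
    have hbr : (⁅H, H'⁆ : 𝔰) = 0 := Subtype.ext (by
      simpa using h𝔞ab _ _ hH hH')
    rw [hα, hbr, map_zero]
  · intro hvan
    -- symmetry of the Killing form
    have hsymm : ∀ X Y : 𝔤, killingForm ℝ 𝔤 X Y = killingForm ℝ 𝔤 Y X :=
      fun X Y => LieModule.traceForm_comm ℝ 𝔤 𝔤 X Y
    -- 𝔞 is abelian, hence nilpotent
    haveI hab : IsLieAbelian 𝔞 := ⟨fun x y => Subtype.ext (by
      simpa using h𝔞ab x y x.2 y.2)⟩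
    -- the set of positive roots is finite
    have hfin : (posRootSet 𝔞 φ Hv).Finite := by
      have h1 : {χ : 𝔞 → ℝ | LieModule.genWeightSpace 𝔤 χ ≠ ⊥}.Finite :=
        LieModule.finite_genWeightSpace_ne_bot ℝ 𝔞 𝔤
      have h2 : posRootSet 𝔞 φ Hv ⊆
          (fun lam : Module.Dual ℝ 𝔞 => (lam : 𝔞 → ℝ)) ⁻¹'
            {χ | LieModule.genWeightSpace 𝔤 χ ≠ ⊥} := by
        rintro lam ⟨-, hne, -⟩
        obtain ⟨x, hx, hx0⟩ := (Submodule.ne_bot_iff _).mp hne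
        have hxw : x ∈ LieModule.weightSpace 𝔤 ((lam : 𝔞 → ℝ)) := by
          rw [LieModule.mem_weightSpace]
          intro H
          rw [LieSubalgebra.coe_bracket_of_module]
          exact hx H
        have hxg : x ∈ LieModule.genWeightSpace 𝔤 ((lam : 𝔞 → ℝ)) :=
          LieModule.weightSpace_le_genWeightSpace 𝔤 _ hxw
        simp only [Set.mem_preimage, Set.mem_setOf_eq]
        intro hbot
        rw [hbot] at hxg
        exact hx0 (by simpa using hxg)
      exact (h1.preimage ((LinearMap.coe_injective).injOn)).subset h2
    -- coordinates of roots
    set u : Fin r → 𝔞 := fun k => Hv (φ k) with hu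
    have hcoord : ∀ (lam : Module.Dual ℝ 𝔞) (k : Fin r),
        lam (u k) = φ k (Hv lam) := by
      intro lam k
      rw [← hHv lam (u k), hsymm, hHv (φ k) (Hv lam)]
    -- existence of a positive element H₀a of 𝔞
    have hvts : ∀ lam ∈ posRootSet 𝔞 φ Hv, ∀ᶠ ε in nhdsWithin (0:ℝ) (Set.Ioi 0),
        0 < lam (∑ k : Fin r, ε ^ (k : ℕ) • u k) := by
      rintro lam ⟨-, -, k₀, hk₀pos, hk₀zero⟩
      have ha0 : ∀ j : Fin r, j < k₀ → lam (u j) = 0 := fun j hj => by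
        rw [hcoord]; exact hk₀zero j hj
      set h : ℝ → ℝ := fun ε => ∑ k : Fin r, ε ^ ((k : ℕ) - (k₀ : ℕ)) * lam (u k) with hh
      have hcont : Continuous h := by
        apply continuous_finset_sum
        intro k _
        exact (continuous_pow _).mul continuous_const
      have hh0 : h 0 = lam (u k₀) := by
        rw [hh]
        simp only
        rw [Finset.sum_eq_single k₀]
        · simp
        · intro k _ hk
          rcases lt_or_gt_of_ne hk with h1 | h1
          · rw [ha0 k h1, mul_zero]
          · rw [zero_pow (by omega : (k : ℕ) - (k₀ : ℕ) ≠ 0), zero_mul]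
        · intro hmem; exact absurd (Finset.mem_univ k₀) hmem
      have hpos0 : 0 < h 0 := by rw [hh0, hcoord]; exact hk₀pos
      have hev : ∀ᶠ ε in nhds (0:ℝ), 0 < h ε := by
        have hm := (hcont.continuousAt (x := 0)).preimage_mem_nhds
          (Ioi_mem_nhds hpos0)
        exact hm
      have hev' : ∀ᶠ ε in nhdsWithin (0:ℝ) (Set.Ioi 0), 0 < h ε :=
        hev.filter_mono nhdsWithin_le_nhds
      filter_upwards [hev', self_mem_nhdsWithin] with ε hhε hεpos
      have hεpos : (0:ℝ) < ε := hεpos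
      have hsum : lam (∑ k : Fin r, ε ^ (k : ℕ) • u k) = ε ^ (k₀ : ℕ) * h ε := by
        rw [map_sum, hh]
        simp only
        rw [Finset.mul_sum]
        apply Finset.sum_congr rfl
        intro k _
        rw [map_smul, smul_eq_mul]
        rcases le_or_gt (k₀ : ℕ) (k : ℕ) with h1 | h1
        · rw [← mul_assoc, ← pow_add]
          congr 2
          omega
        · rw [ha0 k (by exact h1), mul_zero, mul_zero, mul_zero]
      rw [hsum]
      exact mul_pos (pow_pos hεpos _) hhε
    obtain ⟨ε, hε⟩ : ∃ ε : ℝ, ∀ lam ∈ posRootSet 𝔞 φ Hv,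
        0 < lam (∑ k : Fin r, ε ^ (k : ℕ) • u k) :=
      ((Filter.eventually_all_finite hfin).mpr hvts).exists
    set H₀a : 𝔞 := ∑ k : Fin r, ε ^ (k : ℕ) • u k with hH₀a
    -- the ambient inclusions
    have h𝔞𝔰 : 𝔞.toSubmodule ≤ 𝔰.toSubmodule := h𝔰 ▸ le_sup_left
    have h𝔫𝔰 : nSub 𝔞 φ Hv ≤ 𝔰.toSubmodule := h𝔰 ▸ le_sup_right
    set H₀ : 𝔰 := ⟨(H₀a : 𝔤), h𝔞𝔰 H₀a.2⟩ with hH₀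
    -- the derivation D = ad H₀ and its eigenspaces
    set D : Module.End ℝ 𝔰 := LieAlgebra.ad ℝ 𝔰 H₀ with hD
    set Eig : ℝ → Submodule ℝ 𝔰 := fun t => Module.End.eigenspace D t with hEigdef
    have hmemEig : ∀ (t : ℝ) (x : 𝔰), x ∈ Eig t ↔ ⁅H₀, x⁆ = t • x := by
      intro t x
      rw [hEigdef]
      rw [Module.End.mem_eigenspace_iff, hD, LieAlgebra.ad_apply]
    set incl : 𝔰 →ₗ[ℝ] 𝔤 := (𝔰.toSubmodule).subtype with hincl
    set A : Submodule ℝ 𝔰 := Submodule.comap incl 𝔞.toSubmodule with hAdef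
    set N : Submodule ℝ 𝔰 := ⨆ (t : ℝ) (_ : 0 < t), Eig t with hNdef
    have hA_mem : ∀ x : 𝔰, x ∈ A ↔ (x : 𝔤) ∈ 𝔞 := by
      intro x
      rw [hAdef, Submodule.mem_comap]
      exact LieSubalgebra.mem_toSubmodule (L' := 𝔞)
    have hAEig0 : A ≤ Eig 0 := by
      intro x hx
      rw [hmemEig, zero_smul]
      exact Subtype.ext (by simpa using h𝔞ab _ _ H₀a.2 ((hA_mem x).mp hx))
    have hrootEig : ∀ lam ∈ posRootSet 𝔞 φ Hv, ∀ x : 𝔰,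
        (x : 𝔤) ∈ rootSpace' 𝔞 lam → x ∈ Eig (lam H₀a) := by
      intro lam hlam x hx
      rw [hmemEig]
      exact Subtype.ext (by simpa using hx H₀a)
    -- A ⊔ N = ⊤
    have hTop : A ⊔ N = ⊤ := by
      rw [eq_top_iff]
      intro x _
      have hx : (x : 𝔤) ∈ 𝔞.toSubmodule ⊔ nSub 𝔞 φ Hv := by
        rw [← h𝔰]; exact x.2
      have hle : 𝔞.toSubmodule ⊔ nSub 𝔞 φ Hv ≤ Submodule.map incl (A ⊔ N) := by
        apply sup_le
        · intro y hy
          exact ⟨⟨y, h𝔞𝔰 hy⟩, Submodule.mem_sup_left ((hA_mem _).mpr hy), rfl⟩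
        · show (⨆ lam ∈ posRootSet 𝔞 φ Hv, rootSpace' 𝔞 lam) ≤ _
          refine iSup₂_le fun lam hlam => ?_
          intro y hy
          have hy𝔰 : y ∈ 𝔰.toSubmodule := h𝔫𝔰
            (le_iSup₂ (f := fun lam (_ : lam ∈ posRootSet 𝔞 φ Hv) =>
              rootSpace' 𝔞 lam) lam hlam hy)
          refine ⟨⟨y, hy𝔰⟩, Submodule.mem_sup_right ?_, rfl⟩
          exact le_iSup₂ (f := fun (t : ℝ) (_ : 0 < t) => Eig t) (lam H₀a)
            (hε lam hlam) (hrootEig lam hlam ⟨y, hy𝔰⟩ hy)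
      obtain ⟨y, hy, hyx⟩ := hle hx
      exact (Subtype.ext hyx : y = x) ▸ hy
    -- eigenspaces are independent
    have hIndep : iSupIndep Eig := Module.End.eigenspaces_iSupIndep D
    have hSupTop : (⨆ t, Eig t) = ⊤ := by
      rw [eq_top_iff, ← hTop]
      apply sup_le
      · exact hAEig0.trans (le_iSup Eig 0)
      · exact iSup₂_le fun t _ => le_iSup Eig t
    have hEigNeg : ∀ t : ℝ, t < 0 → Eig t = ⊥ := by
      intro t ht
      have hle : Eig t ≤ ⨆ s, ⨆ (_ : s ≠ t), Eig s := by
        calc Eig t ≤ ⊤ := le_top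
          _ = A ⊔ N := hTop.symm
          _ ≤ ⨆ s, ⨆ (_ : s ≠ t), Eig s := by
              apply sup_le
              · exact hAEig0.trans
                  (le_iSup₂ (f := fun (s : ℝ) (_ : s ≠ t) => Eig s) 0 ht.ne')
              · exact iSup₂_le fun s hs =>
                  le_iSup₂ (f := fun (s : ℝ) (_ : s ≠ t) => Eig s) s
                    (by intro hst; rw [hst] at hs; linarith)
      exact (hIndep t).eq_bot_of_le hle
    have hEig0A : Eig 0 ≤ A := by
      intro x hx
      have hx' : x ∈ A ⊔ N := hTop ▸ Submodule.mem_top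
      obtain ⟨a, ha, n, hn, hanx⟩ := Submodule.mem_sup.mp hx'
      have hn0 : n = 0 := by
        have h1 : n ∈ Eig 0 := by
          have hne : n = x - a := by rw [← hanx]; abel
          rw [hne]
          exact Submodule.sub_mem _ hx (hAEig0 ha)
        have h2 : n ∈ ⨆ s, ⨆ (_ : s ≠ (0:ℝ)), Eig s := by
          refine (iSup₂_le fun t htpos =>
            le_iSup₂ (f := fun (s : ℝ) (_ : s ≠ (0:ℝ)) => Eig s) t htpos.ne') hn
        exact Submodule.disjoint_def.mp (hIndep 0) n h1 h2
      rw [← hanx, hn0, add_zero]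
      exact ha
    -- brackets of eigenvectors
    have hBrEig : ∀ (s t : ℝ) (X Y : 𝔰), X ∈ Eig s → Y ∈ Eig t →
        ⁅X, Y⁆ ∈ Eig (s + t) := by
      intro s t X Y hX hY
      rw [hmemEig] at hX hY ⊢
      rw [leibniz_lie, hX, hY, smul_lie, lie_smul, add_smul]
    -- the direct sum decomposition and the primitive α
    have hInt : DirectSum.IsInternal Eig :=
      DirectSum.isInternal_submodule_of_iSupIndep_of_iSup_eq_top hIndep hSupTop
    set e := LinearEquiv.ofBijective (DirectSum.coeLinearMap Eig) hInt with hedef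
    set α : 𝔰 →ₗ[ℝ] ℂ :=
      (DirectSum.toModule ℝ ℝ ℂ (fun t => (t⁻¹ • ((c H₀).comp (Eig t).subtype)))).comp
        (e.symm : 𝔰 →ₗ[ℝ] DirectSum ℝ (fun t => Eig t)) with hαdef
    have hαEig : ∀ (t : ℝ) (x : 𝔰), x ∈ Eig t → α x = t⁻¹ • c H₀ x := by
      intro t x hx
      have h1 : e.symm x = DirectSum.lof ℝ ℝ (fun t => Eig t) t ⟨x, hx⟩ := by
        apply e.injective
        rw [LinearEquiv.apply_symm_apply, hedef]
        show x = DirectSum.coeLinearMap Eig _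
        rw [
          DirectSum.lof_eq_of, DirectSum.coeLinearMap_of]
      rw [hαdef, LinearMap.comp_apply, LinearEquiv.coe_coe, h1,
        DirectSum.toModule_lof]
      simp
    -- the key computation on eigenvectors
    have key : ∀ (s t : ℝ) (X Y : 𝔰), X ∈ Eig s → Y ∈ Eig t →
        c X Y = α ⁅X, Y⁆ := by
      intro s t X Y hXs hYt
      rcases lt_or_ge s 0 with hs | hs
      · have hX0 : X = 0 := by rw [hEigNeg s hs] at hXs; simpa using hXs
        simp [hX0]
      rcases lt_or_ge t 0 with ht | ht
      · have hY0 : Y = 0 := by rw [hEigNeg t ht] at hYt; simpa using hYt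
        simp [hY0]
      rcases eq_or_lt_of_le (by linarith : (0:ℝ) ≤ s + t) with hst | hst
      · have hs0 : s = 0 := by linarith
        have ht0 : t = 0 := by linarith
        have hX𝔞 : (X : 𝔤) ∈ 𝔞 := (hA_mem X).mp (hEig0A (hs0 ▸ hXs))
        have hY𝔞 : (Y : 𝔤) ∈ 𝔞 := (hA_mem Y).mp (hEig0A (ht0 ▸ hYt))
        have hbr : (⁅X, Y⁆ : 𝔰) = 0 := Subtype.ext (by
          simpa using h𝔞ab _ _ hX𝔞 hY𝔞)
        rw [hvan X Y hX𝔞 hY𝔞, hbr, map_zero]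
      · have h1 : ⁅X, Y⁆ ∈ Eig (s + t) := hBrEig s t X Y hXs hYt
        have h2 : α ⁅X, Y⁆ = (s + t)⁻¹ • c H₀ ⁅X, Y⁆ := hαEig _ _ h1
        have hX' : (⁅H₀, X⁆ : 𝔰) = s • X := (hmemEig s X).mp hXs
        have hY' : (⁅H₀, Y⁆ : 𝔰) = t • Y := (hmemEig t Y).mp hYt
        have hYH : (⁅Y, H₀⁆ : 𝔰) = (-t) • Y := by
          rw [show (⁅Y, H₀⁆ : 𝔰) = -⁅H₀, Y⁆ from (lie_skew Y H₀).symm, hY',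
            neg_smul]
        have hc := hcocycle H₀ X Y
        rw [hX', hYH] at hc
        have e1 : c (s • X) Y = s • c X Y := by
          rw [map_smul, LinearMap.smul_apply]
        have e3 : c ((-t) • Y) X = t • c X Y := by
          rw [map_smul, LinearMap.smul_apply, hanti Y X, neg_smul, smul_neg,
            neg_neg]
        have e2 : c ⁅X, Y⁆ H₀ = - c H₀ ⁅X, Y⁆ := hanti _ _
        rw [e1, e2, e3] at hc
        have hcs : (s + t) • c X Y = c H₀ ⁅X, Y⁆ := by
          rw [add_smul]
          linear_combination hc
        rw [h2, ← hcs, smul_smul, inv_mul_cancel₀ hst.ne', one_smul]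
    -- extend by bilinearity
    refine ⟨α, ?_⟩
    have main : ∀ X, X ∈ (⨆ t, Eig t) → ∀ Y ∈ (⨆ t, Eig t),
        c X Y = α ⁅X, Y⁆ := by
      intro X hX
      refine Submodule.iSup_induction Eig
        (motive := fun X => ∀ Y ∈ (⨆ t, Eig t), c X Y = α ⁅X, Y⁆) hX ?_ ?_ ?_
      · intro s X hXs Y hY
        refine Submodule.iSup_induction Eig
          (motive := fun Y => c X Y = α ⁅X, Y⁆) hY ?_ ?_ ?_
        · intro t Y hYt
          exact key s t X Y hXs hYt
        · simp
        · intro Y₁ Y₂ h1 h2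
          rw [lie_add, map_add, map_add, h1, h2]
      · intro Y hY
        simp
      · intro X₁ X₂ h1 h2 Y hY
        rw [add_lie, map_add, map_add, LinearMap.add_apply, h1 Y hY, h2 Y hY]
    intro X Y
    exact main X (hSupTop ▸ Submodule.mem_top) Y (hSupTop ▸ Submodule.mem_top)
end

section
/- Let c : 𝔰 × 𝔰 → ℂ be a Chevalley–Eilenberg 2-cocycle (for the trivial representation of 𝔰 on ℂ) satisfying the invariance condition c([[Z, X]]_𝔰, Y) + c(X, [[Z, Y]]_𝔰) = 0 for all Z ∈ 𝔨 and X, Y ∈ 𝔰. Then c is a Chevalley–Eilenberg 2-coboundary. (This is the algebraic content of the statement that every G-invariant closed differential 2-form on the symmetric bounded domain 𝔻 is the exterior derivative of an 𝕊-invariant 1-form.) -/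
section Cyc3Helpers

variable {𝔤 : Type} [LieRing 𝔤] [LieAlgebra ℝ 𝔤]

/-- The cyclic sum appearing in the 2-cocycle identity. -/
noncomputable def cyc3 (B : 𝔤 →ₗ[ℝ] 𝔤 →ₗ[ℝ] ℂ) (x y z : 𝔤) : ℂ :=
  B ⁅x, y⁆ z + B ⁅y, z⁆ x + B ⁅z, x⁆ y

lemma cyc3_rot (B : 𝔤 →ₗ[ℝ] 𝔤 →ₗ[ℝ] ℂ) (x y z : 𝔤) :
    cyc3 B x y z = cyc3 B y z x := by unfold cyc3; ring

lemma cyc3_add1 (B : 𝔤 →ₗ[ℝ] 𝔤 →ₗ[ℝ] ℂ) (x x' y z : 𝔤) :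
    cyc3 B (x + x') y z = cyc3 B x y z + cyc3 B x' y z := by
  simp only [cyc3, add_lie, lie_add, map_add, LinearMap.add_apply]; ring

lemma cyc3_add2 (B : 𝔤 →ₗ[ℝ] 𝔤 →ₗ[ℝ] ℂ) (x y y' z : 𝔤) :
    cyc3 B x (y + y') z = cyc3 B x y z + cyc3 B x y' z := by
  simp only [cyc3, add_lie, lie_add, map_add, LinearMap.add_apply]; ring

lemma cyc3_add3 (B : 𝔤 →ₗ[ℝ] 𝔤 →ₗ[ℝ] ℂ) (x y z z' : 𝔤) :
    cyc3 B x y (z + z') = cyc3 B x y z + cyc3 B x y z' := by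
  simp only [cyc3, add_lie, lie_add, map_add, LinearMap.add_apply]; ring

end Cyc3Helpers

/-- A Chevalley–Eilenberg 2-cocycle `c` on `𝔰` satisfying the `𝔨`-invariance
condition `c([[Z,X]]_𝔰, Y) + c(X, [[Z,Y]]_𝔰) = 0` for all `Z ∈ 𝔨`, `X, Y ∈ 𝔰` is a
2-coboundary. -/
theorem statement6
    (𝔤 : Type) [LieRing 𝔤] [LieAlgebra ℝ 𝔤] [Module.Finite ℝ 𝔤]
    [LieAlgebra.IsSemisimple ℝ 𝔤]
    -- `σ` is a Cartan involution of `𝔤`: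
    (σ : 𝔤 →ₗ⁅ℝ⁆ 𝔤) (hσinv : ∀ X, σ (σ X) = X)
    (hσpos : ∀ X : 𝔤, X ≠ 0 → 0 < -(killingForm ℝ 𝔤 X (σ X)))
    -- `𝔞` is a maximal abelian subalgebra contained in `𝔭 = {X : σ X = -X}`:
    (𝔞 : LieSubalgebra ℝ 𝔤)
    (h𝔞ab : ∀ X Y : 𝔤, X ∈ 𝔞 → Y ∈ 𝔞 → ⁅X, Y⁆ = 0)
    (h𝔞p : ∀ X ∈ 𝔞, σ X = -X)
    (h𝔞max : ∀ 𝔟 : LieSubalgebra ℝ 𝔤, (∀ X Y : 𝔤, X ∈ 𝔟 → Y ∈ 𝔟 → ⁅X, Y⁆ = 0) →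
      (∀ X ∈ 𝔟, σ X = -X) → 𝔞 ≤ 𝔟 → 𝔟 = 𝔞)
    -- `φ` is a basis of `𝔞*` and `Hv lam = H_λ` is determined by the Killing form:
    (r : ℕ) (φ : Module.Basis (Fin r) ℝ (Module.Dual ℝ 𝔞))
    (Hv : Module.Dual ℝ 𝔞 → 𝔞)
    (hHv : ∀ (lam : Module.Dual ℝ 𝔞) (H : 𝔞),
      killingForm ℝ 𝔤 (Hv lam : 𝔤) (H : 𝔤) = lam H)
    -- `𝔰` is the Iwasawa subalgebra `𝔞 ⊕ 𝔫`:
    (𝔰 : LieSubalgebra ℝ 𝔤) (h𝔰 : 𝔰.toSubmodule = 𝔞.toSubmodule ⊔ nSub 𝔞 φ Hv)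
    -- `proj = [·]_𝔰` is the projection of `𝔤` onto `𝔰` along `𝔨` (Iwasawa decomposition):
    (proj : 𝔤 →ₗ[ℝ] 𝔰)
    (hproj𝔨 : ∀ X : 𝔤, σ (X - (proj X : 𝔤)) = X - (proj X : 𝔤))
    (hproj𝔰 : ∀ S : 𝔰, proj (S : 𝔤) = S)
    -- `c` is a Chevalley–Eilenberg 2-cocycle on `𝔰` with trivial coefficients in `ℂ`:
    (c : 𝔰 →ₗ[ℝ] 𝔰 →ₗ[ℝ] ℂ)
    (hanti : ∀ X Y : 𝔰, c X Y = - c Y X)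
    (hcocycle : ∀ X Y Z : 𝔰, c ⁅X, Y⁆ Z + c ⁅Y, Z⁆ X + c ⁅Z, X⁆ Y = 0)
    -- `c` satisfies the infinitesimal `G`-invariance condition:
    (hinv : ∀ Z : 𝔤, σ Z = Z → ∀ X Y : 𝔰,
      c (proj ⁅Z, (X : 𝔤)⁆) Y + c X (proj ⁅Z, (Y : 𝔤)⁆) = 0) :
    -- `c` is a 2-coboundary:
    ∃ α : 𝔰 →ₗ[ℝ] ℂ, ∀ X Y : 𝔰, c X Y = α ⁅X, Y⁆ := by
  set κ := killingForm ℝ 𝔤 with hκdef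
  have hκsymm : ∀ x y : 𝔤, κ x y = κ y x := fun x y => LieModule.traceForm_comm ℝ 𝔤 𝔤 x y
  have hκinv : ∀ x y z : 𝔤, κ ⁅x, y⁆ z = κ x ⁅y, z⁆ := fun x y z =>
    LieModule.traceForm_apply_lie_apply ℝ 𝔤 𝔤 x y z
  have hκinv' : ∀ x y z : 𝔤, κ ⁅x, y⁆ z = -κ y ⁅x, z⁆ := fun x y z =>
    LieModule.traceForm_apply_lie_apply' ℝ 𝔤 𝔤 x y z
  -- nondegeneracy of the Killing form, from positivity of `β_σ`
  have hker : ∀ x : 𝔤, (∀ y : 𝔤, κ x y = 0) → x = 0 := by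
    intro x hx
    by_contra h0
    have h1 := hσpos x h0
    rw [hx (σ x)] at h1
    simp at h1
  -- positivity/negativity on the `±1` eigenspaces of `σ`
  have hpos𝔭 : ∀ x : 𝔤, σ x = -x → x ≠ 0 → 0 < κ x x := by
    intro x hσx h0
    have := hσpos x h0
    rw [hσx, map_neg] at this
    simpa using this
  have hneg𝔨 : ∀ x : 𝔤, σ x = x → x ≠ 0 → κ x x < 0 := by
    intro x hσx h0
    have := hσpos x h0
    rw [hσx] at this
    linarith
  -- orthogonality of root spaces for `lam + mu ≠ 0`
  have horth : ∀ lam mu : Module.Dual ℝ 𝔞, lam + mu ≠ 0 →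
      ∀ x ∈ rootSpace' 𝔞 lam, ∀ y ∈ rootSpace' 𝔞 mu, κ x y = 0 := by
    intro lam mu hne x hx y hy
    obtain ⟨H, hH⟩ : ∃ H : 𝔞, (lam + mu) H ≠ 0 := by
      by_contra h'
      push_neg at h'
      exact hne (LinearMap.ext fun H => h' H)
    have h1 : κ ⁅(H : 𝔤), x⁆ y = lam H * κ x y := by
      rw [hx H, map_smul, LinearMap.smul_apply, smul_eq_mul]
    have h2 : κ x ⁅(H : 𝔤), y⁆ = mu H * κ x y := by
      rw [hy H, map_smul, smul_eq_mul]
    have h3 : κ ⁅(H : 𝔤), x⁆ y = -κ x ⁅(H : 𝔤), y⁆ := by rw [hκinv' (H : 𝔤) x y]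
    have h4 : (lam H + mu H) * κ x y = 0 := by rw [h1, h2] at h3; linarith
    have h5 : lam H + mu H ≠ 0 := by simpa using hH
    exact (mul_eq_zero.mp h4).resolve_left h5
  -- elements of `𝔞` lie in the zero root space
  have h𝔞0 : ∀ a : 𝔤, a ∈ 𝔞 → a ∈ rootSpace' 𝔞 (0 : Module.Dual ℝ 𝔞) := by
    intro a ha H
    show ⁅(H : 𝔤), a⁆ = (0 : Module.Dual ℝ 𝔞) H • a
    rw [h𝔞ab (H : 𝔤) a H.2 ha]
    simp
  -- injectivity of `κ` restricted to `𝔞`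
  have h𝔞inj : ∀ V : 𝔞, (∀ H : 𝔞, κ (V : 𝔤) (H : 𝔤) = 0) → V = 0 := by
    intro V hV
    by_contra h0
    have hV0 : (V : 𝔤) ≠ 0 := fun h => h0 (Subtype.ext h)
    have := hpos𝔭 (V : 𝔤) (h𝔞p (V : 𝔤) V.2) hV0
    rw [hV V] at this
    exact lt_irrefl 0 this
  -- sums of positive roots are nonzero
  have hposne : ∀ lam ∈ posRootSet 𝔞 φ Hv, ∀ mu ∈ posRootSet 𝔞 φ Hv, lam + mu ≠ 0 := by
    rintro lam ⟨-, -, k, hk, hkj⟩ mu ⟨-, -, k', hk', hk'j⟩ hlm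
    have hVsum : Hv lam + Hv mu = 0 := by
      apply h𝔞inj
      intro H
      have hcoe : ((Hv lam + Hv mu : 𝔞) : 𝔤) = (Hv lam : 𝔤) + (Hv mu : 𝔤) := rfl
      have h3 : lam H + mu H = 0 := by
        have := LinearMap.congr_fun hlm H
        simpa using this
      rw [hcoe, map_add, LinearMap.add_apply, hHv lam H, hHv mu H, h3]
    have hHmu : Hv mu = -Hv lam := by
      have := eq_neg_of_add_eq_zero_right hVsum
      rw [this]
    have hφmu : ∀ j : Fin r, φ j (Hv mu) = -φ j (Hv lam) := by
      intro j; rw [hHmu, map_neg]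
    rcases lt_trichotomy k k' with h | h | h
    · have := hk'j k h
      rw [hφmu k] at this
      have : φ k (Hv lam) = 0 := by linarith
      exact absurd this (ne_of_gt hk)
    · subst h
      rw [hφmu k] at hk'
      linarith
    · have := hkj k' h
      rw [hφmu k'] at hk'
      linarith
  -- `𝔞` is orthogonal to `𝔫`, and `𝔫` is orthogonal to itself
  have h𝔞n : ∀ a : 𝔤, a ∈ 𝔞 → ∀ n ∈ nSub 𝔞 φ Hv, κ a n = 0 := by
    intro a ha
    have : nSub 𝔞 φ Hv ≤ LinearMap.ker (κ a) := by
      apply iSup₂_le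
      intro mu hmu x hx
      have hne : (0 : Module.Dual ℝ 𝔞) + mu ≠ 0 := by
        rw [zero_add]; exact hmu.1
      exact LinearMap.mem_ker.mpr (horth 0 mu hne a (h𝔞0 a ha) x hx)
    intro n hn
    exact LinearMap.mem_ker.mp (this hn)
  have hnn : ∀ x ∈ nSub 𝔞 φ Hv, ∀ y ∈ nSub 𝔞 φ Hv, κ x y = 0 := by
    have step : ∀ lam ∈ posRootSet 𝔞 φ Hv, ∀ x ∈ rootSpace' 𝔞 lam,
        ∀ y ∈ nSub 𝔞 φ Hv, κ x y = 0 := by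
      intro lam hlam x hx
      have : nSub 𝔞 φ Hv ≤ LinearMap.ker (κ x) := by
        apply iSup₂_le
        intro mu hmu y hy
        exact LinearMap.mem_ker.mpr (horth lam mu (hposne lam hlam mu hmu) x hx y hy)
      intro y hy
      exact LinearMap.mem_ker.mp (this hy)
    intro x hx
    have hxmem : x ∈ ⨅ y ∈ nSub 𝔞 φ Hv, LinearMap.ker ((κ : 𝔤 →ₗ[ℝ] 𝔤 →ₗ[ℝ] ℝ).flip y) := by
      revert x
      rw [← SetLike.le_def]
      apply iSup₂_le
      intro lam hlam x hx
      rw [Submodule.mem_iInf]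
      intro y
      rw [Submodule.mem_iInf]
      intro hy
      exact LinearMap.mem_ker.mpr (step lam hlam x hx y hy)
    intro y hy
    rw [Submodule.mem_iInf] at hxmem
    have := hxmem y
    rw [Submodule.mem_iInf] at this
    exact LinearMap.mem_ker.mp (this hy)
  -- `𝔨 ∩ 𝔰 = 0`
  have h𝔰fix : ∀ S : 𝔰, σ (S : 𝔤) = (S : 𝔤) → (S : 𝔤) = 0 := by
    intro S hσS
    by_contra h0
    have hmem : (S : 𝔤) ∈ 𝔞.toSubmodule ⊔ nSub 𝔞 φ Hv := by
      rw [← h𝔰]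
      exact S.2
    obtain ⟨a, ha, n, hn, hsum⟩ := Submodule.mem_sup.mp hmem
    have ha' : a ∈ 𝔞 := ha
    have hκS : κ (S : 𝔤) (S : 𝔤) = κ a a := by
      have expand : κ (a + n) (a + n) = κ a a + κ a n + κ n a + κ n n := by
        simp only [map_add, LinearMap.add_apply]
        ring
      rw [← hsum, expand, h𝔞n a ha' n hn, hnn n hn n hn, hκsymm n a, h𝔞n a ha' n hn]
      ring
    have haa : 0 ≤ κ a a := by
      rcases eq_or_ne a 0 with h | h
      · simp [h]
      · exact le_of_lt (hpos𝔭 a (h𝔞p a ha') h)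
    have := hneg𝔨 (S : 𝔤) hσS h0
    rw [hκS] at this
    linarith
  -- the projection kills `𝔨`
  have hprojfix : ∀ Z : 𝔤, σ Z = Z → proj Z = 0 := by
    intro Z hZ
    have hσp : σ ((proj Z : 𝔤)) = (proj Z : 𝔤) := by
      have h1 := hproj𝔨 Z
      have : σ ((proj Z : 𝔤)) = σ Z - σ (Z - (proj Z : 𝔤)) := by
        rw [← map_sub]
        congr 1
        abel
      rw [this, h1, hZ]
      abel
    have := h𝔰fix (proj Z) hσp
    exact Subtype.ext this
  -- the extended bilinear form `cC x y = c (proj x) (proj y)` on `𝔤`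
  set cC : 𝔤 →ₗ[ℝ] 𝔤 →ₗ[ℝ] ℂ := (c.comp proj).compl₂ proj with hcCdef
  have hcC : ∀ x y : 𝔤, cC x y = c (proj x) (proj y) := fun x y => rfl
  have hCanti : ∀ x y : 𝔤, cC x y = -cC y x := fun x y => hanti _ _
  -- the cocycle identity for `cC`
  have hJs : ∀ S T U : 𝔰, cyc3 cC (S : 𝔤) (T : 𝔤) (U : 𝔤) = 0 := by
    intro S T U
    have hb : ∀ A B : 𝔰, proj ⁅(A : 𝔤), (B : 𝔤)⁆ = ⁅A, B⁆ := by
      intro A B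
      rw [← LieSubalgebra.coe_bracket, hproj𝔰]
    show cC ⁅(S : 𝔤), (T : 𝔤)⁆ (U : 𝔤) + cC ⁅(T : 𝔤), (U : 𝔤)⁆ (S : 𝔤)
        + cC ⁅(U : 𝔤), (S : 𝔤)⁆ (T : 𝔤) = 0
    rw [hcC, hcC, hcC, hb S T, hb T U, hb U S, hproj𝔰, hproj𝔰, hproj𝔰]
    exact hcocycle S T U
  have hJssk : ∀ S T : 𝔰, ∀ z : 𝔤, σ z = z → cyc3 cC (S : 𝔤) (T : 𝔤) z = 0 := by
    intro S T z hz
    have h1 : cC ⁅(S : 𝔤), (T : 𝔤)⁆ z = 0 := by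
      rw [hcC, hprojfix z hz, map_zero]
    have h2 : cC ⁅(T : 𝔤), z⁆ (S : 𝔤) = -c (proj ⁅z, (T : 𝔤)⁆) S := by
      rw [hcC, hproj𝔰, show ⁅(T : 𝔤), z⁆ = -⁅z, (T : 𝔤)⁆ from (lie_skew (T : 𝔤) z).symm,
        map_neg, map_neg, LinearMap.neg_apply]
    have h3 : cC ⁅z, (S : 𝔤)⁆ (T : 𝔤) = c (proj ⁅z, (S : 𝔤)⁆) T := by
      rw [hcC, hproj𝔰]
    have h4 := hinv z hz S T
    have h5 := hanti S (proj ⁅z, (T : 𝔤)⁆)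
    show cC ⁅(S : 𝔤), (T : 𝔤)⁆ z + cC ⁅(T : 𝔤), z⁆ (S : 𝔤) + cC ⁅z, (S : 𝔤)⁆ (T : 𝔤) = 0
    rw [h1, h2, h3]
    linear_combination h4 - h5
  have hJkk : ∀ x y z : 𝔤, σ x = x → σ y = y → cyc3 cC x y z = 0 := by
    intro x y z hx hy
    have hxy : σ ⁅x, y⁆ = ⁅x, y⁆ := by rw [LieHom.map_lie, hx, hy]
    show cC ⁅x, y⁆ z + cC ⁅y, z⁆ x + cC ⁅z, x⁆ y = 0
    rw [hcC, hcC, hcC, hprojfix _ hxy, hprojfix x hx, hprojfix y hy]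
    simp
  have hJk : ∀ x : 𝔤, σ x = x → ∀ y z : 𝔤, cyc3 cC x y z = 0 := by
    intro x hx y z
    calc cyc3 cC x y z
        = cyc3 cC x (y - ↑(proj y)) z + cyc3 cC x ↑(proj y) z := by
          rw [← cyc3_add2, sub_add_cancel]
      _ = cyc3 cC x ↑(proj y) z := by
          rw [hJkk x _ z hx (hproj𝔨 y), zero_add]
      _ = cyc3 cC x ↑(proj y) (z - ↑(proj z)) + cyc3 cC x ↑(proj y) ↑(proj z) := by
          rw [← cyc3_add3, sub_add_cancel]
      _ = 0 := by
          rw [cyc3_rot cC x ↑(proj y) (z - ↑(proj z)),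
            cyc3_rot cC ↑(proj y) (z - ↑(proj z)) x,
            hJkk _ x _ (hproj𝔨 z) hx, zero_add,
            cyc3_rot cC x ↑(proj y) ↑(proj z),
            hJssk (proj y) (proj z) x hx]
  have hCcocycle : ∀ x y z : 𝔤, cyc3 cC x y z = 0 := by
    intro x y z
    have d1 : cyc3 cC x y z
        = cyc3 cC (x - ↑(proj x)) y z + cyc3 cC ↑(proj x) y z := by
      rw [← cyc3_add1, sub_add_cancel]
    have e1 : cyc3 cC (x - ↑(proj x)) y z = 0 := hJk _ (hproj𝔨 x) y z
    have d2 : cyc3 cC ↑(proj x) y z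
        = cyc3 cC ↑(proj x) (y - ↑(proj y)) z + cyc3 cC ↑(proj x) ↑(proj y) z := by
      rw [← cyc3_add2, sub_add_cancel]
    have e2 : cyc3 cC ↑(proj x) (y - ↑(proj y)) z = 0 := by
      rw [cyc3_rot]
      exact hJk _ (hproj𝔨 y) _ _
    have d3 : cyc3 cC ↑(proj x) ↑(proj y) z
        = cyc3 cC ↑(proj x) ↑(proj y) (z - ↑(proj z))
          + cyc3 cC ↑(proj x) ↑(proj y) ↑(proj z) := by
      rw [← cyc3_add3, sub_add_cancel]
    have e3 : cyc3 cC ↑(proj x) ↑(proj y) (z - ↑(proj z)) = 0 := by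
      rw [cyc3_rot, cyc3_rot]
      exact hJk _ (hproj𝔨 z) _ _
    have e4 : cyc3 cC ↑(proj x) ↑(proj y) ↑(proj z) = 0 := hJs _ _ _
    rw [d1, e1, zero_add, d2, e2, zero_add, d3, e3, zero_add, e4]
  -- `𝔤` has nondegenerate Killing form
  haveI : LieAlgebra.IsKilling ℝ 𝔤 := by
    constructor
    rw [LieSubmodule.eq_bot_iff]
    intro m hm
    rw [LieIdeal.mem_killingCompl] at hm
    exact hker m fun y => by rw [hκsymm]; exact hm y (by simp)
  -- every real-valued 2-cocycle on `𝔤` is a coboundary (Whitehead)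
  have main : ∀ B : 𝔤 →ₗ[ℝ] 𝔤 →ₗ[ℝ] ℝ, (∀ x y, B x y = -B y x) →
      (∀ x y z, B ⁅x, y⁆ z + B ⁅y, z⁆ x + B ⁅z, x⁆ y = 0) →
      ∃ a : 𝔤 →ₗ[ℝ] ℝ, ∀ x y, B x y = a ⁅x, y⁆ := by
    intro B hBa hBc
    have hnd : (killingForm ℝ 𝔤).Nondegenerate :=
      LieAlgebra.IsKilling.killingForm_nondegenerate ℝ 𝔤
    set γ : 𝔤 →ₗ[ℝ] 𝔤 :=
      (((killingForm ℝ 𝔤).toDual hnd).symm : Module.Dual ℝ 𝔤 →ₗ[ℝ] 𝔤).comp B with hγdef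
    have hγ : ∀ x y : 𝔤, κ (γ x) y = B x y := by
      intro x y
      show killingForm ℝ 𝔤 (((killingForm ℝ 𝔤).toDual hnd).symm (B x)) y = B x y
      exact LinearMap.BilinForm.apply_toDual_symm_apply (B x) y
    have hder : ∀ x y : 𝔤, γ ⁅x, y⁆ = ⁅x, γ y⁆ - ⁅y, γ x⁆ := by
      intro x y
      have h0 : ∀ z : 𝔤, κ (γ ⁅x, y⁆ - (⁅x, γ y⁆ - ⁅y, γ x⁆)) z = 0 := by
        intro z
        rw [map_sub, LinearMap.sub_apply, map_sub, LinearMap.sub_apply]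
        rw [hγ, hκinv' x (γ y) z, hκinv' y (γ x) z, hγ, hγ]
        have hB1 : B y ⁅x, z⁆ = -(B y ⁅z, x⁆) := by
          rw [show ⁅x, z⁆ = -⁅z, x⁆ from (lie_skew x z).symm, map_neg]
        have h' : B ⁅x, y⁆ z - (-B y ⁅x, z⁆ - -B x ⁅y, z⁆)
            = B ⁅x, y⁆ z + B ⁅y, z⁆ x + B ⁅z, x⁆ y := by
          rw [hB1, hBa y ⁅z, x⁆, hBa x ⁅y, z⁆]; ring
        rw [h']
        exact hBc x y z
      exact sub_eq_zero.mp (hker _ h0)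
    obtain ⟨w, hw⟩ := LieDerivation.IsKilling.exists_eq_ad (⟨γ, hder⟩ : LieDerivation ℝ 𝔤 𝔤)
    refine ⟨killingForm ℝ 𝔤 w, fun x y => ?_⟩
    have hγw : γ x = ⁅w, x⁆ := by
      have h1 := DFunLike.congr_fun hw x
      have h2 : (LieDerivation.ad ℝ 𝔤 w) x = ⁅w, x⁆ := by
        simp [LieDerivation.coe_ad_apply_eq_ad_apply]
      rw [← h2, h1]
      rfl
    rw [← hγ, hγw, hκinv w x y]
  -- split `cC` into real and imaginary parts and conclude
  set B1 : 𝔤 →ₗ[ℝ] 𝔤 →ₗ[ℝ] ℝ := cC.compr₂ Complex.reLm with hB1def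
  set B2 : 𝔤 →ₗ[ℝ] 𝔤 →ₗ[ℝ] ℝ := cC.compr₂ Complex.imLm with hB2def
  have hB1app : ∀ x y : 𝔤, B1 x y = (cC x y).re := fun x y => rfl
  have hB2app : ∀ x y : 𝔤, B2 x y = (cC x y).im := fun x y => rfl
  obtain ⟨a1, ha1⟩ := main B1
    (fun x y => by rw [hB1app, hB1app, hCanti x y]; simp)
    (fun x y z => by
      have := hCcocycle x y z
      rw [show cyc3 cC x y z = cC ⁅x, y⁆ z + cC ⁅y, z⁆ x + cC ⁅z, x⁆ y from rfl] at this
      rw [hB1app, hB1app, hB1app]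
      have := congrArg Complex.re this
      simpa using this)
  obtain ⟨a2, ha2⟩ := main B2
    (fun x y => by rw [hB2app, hB2app, hCanti x y]; simp)
    (fun x y z => by
      have := hCcocycle x y z
      rw [show cyc3 cC x y z = cC ⁅x, y⁆ z + cC ⁅y, z⁆ x + cC ⁅z, x⁆ y from rfl] at this
      rw [hB2app, hB2app, hB2app]
      have := congrArg Complex.im this
      simpa using this)
  refine ⟨{
      toFun := fun S => (a1 (S : 𝔤) : ℂ) + (a2 (S : 𝔤) : ℂ) * Complex.I
      map_add' := by
        intro S T
        have h : ((S + T : 𝔰) : 𝔤) = (S : 𝔤) + (T : 𝔤) := rfl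
        rw [h, map_add, map_add]
        push_cast
        ring
      map_smul' := by
        intro t S
        have h : ((t • S : 𝔰) : 𝔤) = t • (S : 𝔤) := rfl
        rw [h, map_smul, map_smul]
        simp [Complex.real_smul]
        ring }, ?_⟩
  intro X Y
  have hXY : c X Y = cC (X : 𝔤) (Y : 𝔤) := by
    rw [hcC, hproj𝔰, hproj𝔰]
  have hbr : ⁅(X : 𝔤), (Y : 𝔤)⁆ = ((⁅X, Y⁆ : 𝔰) : 𝔤) :=
    (LieSubalgebra.coe_bracket 𝔰 X Y).symm
  show c X Y = (a1 ((⁅X, Y⁆ : 𝔰) : 𝔤) : ℂ) + (a2 ((⁅X, Y⁆ : 𝔰) : 𝔤) : ℂ) * Complex.I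
  rw [hXY, ← hbr, ← ha1, ← ha2, hB1app, hB2app]
  exact (Complex.re_add_im _).symm
end

section
/- The set {[[X, Y]]_𝔰 : X ∈ 𝔰, Y ∈ 𝔨} spans 𝔰 as a real vector space. Consequently, every ℝ-linear map α : 𝔰 → ℂ satisfying α([[X, Y]]_𝔰) = 0 for all X ∈ 𝔰 and Y ∈ 𝔨 vanishes identically. (This is the algebraic content of the statement that every G-invariant differential 1-form on the symmetric bounded domain 𝔻 is zero, so that the G-equivalence classes of G-invariant star-products on 𝔻 are parametrized by Z²(𝔻)^G[[ν]].) -/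
lemma jointEig {V : Type*} [AddCommGroup V] [Module ℝ V] [Module.Finite ℝ V]
    (B : V →ₗ[ℝ] V →ₗ[ℝ] ℝ) (hsymm : ∀ x y, B x y = B y x)
    (hpos : ∀ x, x ≠ 0 → 0 < B x x)
    {ι : Type*} (T : ι → V →ₗ[ℝ] V) (hT : ∀ i x y, B (T i x) y = B x (T i y))
    (hC : Pairwise (Function.onFun Commute T)) :
    ⨆ χ : ι → ℝ, ⨅ i, Module.End.eigenspace (T i) (χ i) = ⊤ := by
  letI c : InnerProductSpace.Core ℝ V :=
    { inner := fun x y => B x y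
      conj_inner_symm := fun x y => by simpa using hsymm y x
      re_inner_nonneg := fun x => by
        rcases eq_or_ne x 0 with h | h
        · simp [h]
        · simpa using (hpos x h).le
      add_left := fun x y z => by simp
      smul_left := fun x y r => by simp
      definite := fun x hx => by
        by_contra h
        exact (hpos x h).ne' (by simpa using hx) }
  letI : NormedAddCommGroup V := c.toNormedAddCommGroup
  letI : InnerProductSpace ℝ V := InnerProductSpace.ofCore c.toCore
  exact LinearMap.IsSymmetric.iSup_iInf_eq_top_of_commute (fun i x y => hT i x y) hC

lemma kσinv {𝔤 : Type} [LieRing 𝔤] [LieAlgebra ℝ 𝔤] [Module.Finite ℝ 𝔤]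
    (σ : 𝔤 →ₗ⁅ℝ⁆ 𝔤) (hσinv : ∀ X, σ (σ X) = X) (x y : 𝔤) :
    killingForm ℝ 𝔤 (σ x) (σ y) = killingForm ℝ 𝔤 x y := by
  have hσσ : (σ : 𝔤 →ₗ[ℝ] 𝔤) ∘ₗ (σ : 𝔤 →ₗ[ℝ] 𝔤) = LinearMap.id := by
    ext w; simp [hσinv]
  have had : ∀ z : 𝔤, LieAlgebra.ad ℝ 𝔤 (σ z)
      = (σ : 𝔤 →ₗ[ℝ] 𝔤) ∘ₗ LieAlgebra.ad ℝ 𝔤 z ∘ₗ (σ : 𝔤 →ₗ[ℝ] 𝔤) := by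
    intro z; ext w
    have : σ ⁅z, σ w⁆ = ⁅σ z, σ (σ w)⁆ := σ.map_lie z (σ w)
    simp only [LieAlgebra.ad_apply, LinearMap.comp_apply, LieHom.coe_toLinearMap]
    rw [this, hσinv]
  rw [killingForm_apply_apply, killingForm_apply_apply, had, had]
  have : ((σ : 𝔤 →ₗ[ℝ] 𝔤) ∘ₗ LieAlgebra.ad ℝ 𝔤 x ∘ₗ (σ : 𝔤 →ₗ[ℝ] 𝔤)) ∘ₗ
      ((σ : 𝔤 →ₗ[ℝ] 𝔤) ∘ₗ LieAlgebra.ad ℝ 𝔤 y ∘ₗ (σ : 𝔤 →ₗ[ℝ] 𝔤))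
      = (σ : 𝔤 →ₗ[ℝ] 𝔤) ∘ₗ ((LieAlgebra.ad ℝ 𝔤 x ∘ₗ LieAlgebra.ad ℝ 𝔤 y) ∘ₗ (σ : 𝔤 →ₗ[ℝ] 𝔤)) := by
    simp only [LinearMap.comp_assoc]
    congr 2
    rw [← LinearMap.comp_assoc, ← LinearMap.comp_assoc, hσσ, LinearMap.id_comp]
  rw [this, LinearMap.trace_comp_comm', LinearMap.comp_assoc, hσσ, LinearMap.comp_id]

set_option maxHeartbeats 2000000 in
/-- The set `{[[X, Y]]_𝔰 : X ∈ 𝔰, Y ∈ 𝔨}` spans `𝔰`; consequently every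
`ℝ`-linear map `α : 𝔰 → ℂ` vanishing on all such elements vanishes identically. -/
theorem statement7
    (𝔤 : Type) [LieRing 𝔤] [LieAlgebra ℝ 𝔤] [Module.Finite ℝ 𝔤]
    [LieAlgebra.IsSemisimple ℝ 𝔤]
    -- `σ` is a Cartan involution of `𝔤`:
    (σ : 𝔤 →ₗ⁅ℝ⁆ 𝔤) (hσinv : ∀ X, σ (σ X) = X)
    (hσpos : ∀ X : 𝔤, X ≠ 0 → 0 < -(killingForm ℝ 𝔤 X (σ X)))
    -- `𝔞` is a maximal abelian subalgebra contained in `𝔭 = {X : σ X = -X}`: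
    (𝔞 : LieSubalgebra ℝ 𝔤)
    (h𝔞ab : ∀ X Y : 𝔤, X ∈ 𝔞 → Y ∈ 𝔞 → ⁅X, Y⁆ = 0)
    (h𝔞p : ∀ X ∈ 𝔞, σ X = -X)
    (h𝔞max : ∀ 𝔟 : LieSubalgebra ℝ 𝔤, (∀ X Y : 𝔤, X ∈ 𝔟 → Y ∈ 𝔟 → ⁅X, Y⁆ = 0) →
      (∀ X ∈ 𝔟, σ X = -X) → 𝔞 ≤ 𝔟 → 𝔟 = 𝔞)
    -- `φ` is a basis of `𝔞*` and `Hv lam = H_λ` is determined by the Killing form: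
    (r : ℕ) (φ : Module.Basis (Fin r) ℝ (Module.Dual ℝ 𝔞))
    (Hv : Module.Dual ℝ 𝔞 → 𝔞)
    (hHv : ∀ (lam : Module.Dual ℝ 𝔞) (H : 𝔞),
      killingForm ℝ 𝔤 (Hv lam : 𝔤) (H : 𝔤) = lam H)
    -- `𝔰` is the Iwasawa subalgebra `𝔞 ⊕ 𝔫`:
    (𝔰 : LieSubalgebra ℝ 𝔤) (h𝔰 : 𝔰.toSubmodule = 𝔞.toSubmodule ⊔ nSub 𝔞 φ Hv)
    -- `proj = [·]_𝔰` is the projection of `𝔤` onto `𝔰` along `𝔨` (Iwasawa decomposition):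
    (proj : 𝔤 →ₗ[ℝ] 𝔰)
    (hproj𝔨 : ∀ X : 𝔤, σ (X - (proj X : 𝔤)) = X - (proj X : 𝔤))
    (hproj𝔰 : ∀ S : 𝔰, proj (S : 𝔤) = S) :
    -- `{[[X, Y]]_𝔰 : X ∈ 𝔰, Y ∈ 𝔨}` spans `𝔰` …
    Submodule.span ℝ {S : 𝔰 | ∃ X : 𝔰, ∃ Y : 𝔤, σ Y = Y ∧ S = proj ⁅(X : 𝔤), Y⁆} = ⊤ ∧
    -- … hence every linear map `α : 𝔰 → ℂ` vanishing on these elements is zero: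
    ∀ α : 𝔰 →ₗ[ℝ] ℂ,
      (∀ (X : 𝔰) (Y : 𝔤), σ Y = Y → α (proj ⁅(X : 𝔤), Y⁆) = 0) → α = 0 := by
  -- Basic facts about the Killing form
  have hκsymm : ∀ x y : 𝔤, killingForm ℝ 𝔤 x y = killingForm ℝ 𝔤 y x :=
    LieModule.traceForm_comm ℝ 𝔤 𝔤
  have hκinv : ∀ x y z : 𝔤, killingForm ℝ 𝔤 ⁅x, y⁆ z = killingForm ℝ 𝔤 x ⁅y, z⁆ :=
    LieModule.traceForm_apply_lie_apply ℝ 𝔤 𝔤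
  have hκσ : ∀ x y : 𝔤, killingForm ℝ 𝔤 (σ x) (σ y) = killingForm ℝ 𝔤 x y := kσinv σ hσinv
  have hσinj : Function.Injective σ := Function.LeftInverse.injective hσinv
  have hσsub : ∀ u v : 𝔤, σ (u - v) = σ u - σ v := fun u v => (σ : 𝔤 →ₗ[ℝ] 𝔤).map_sub u v
  have hσadd : ∀ u v : 𝔤, σ (u + v) = σ u + σ v := fun u v => (σ : 𝔤 →ₗ[ℝ] 𝔤).map_add u v
  have hσzero : σ 0 = 0 := (σ : 𝔤 →ₗ[ℝ] 𝔤).map_zero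
  have hQ : ∀ x : 𝔤, 0 ≤ -killingForm ℝ 𝔤 x (σ x) := by
    intro x
    rcases eq_or_ne x 0 with h | h
    · simp [h]
    · exact (hσpos x h).le
  have hQ0 : ∀ x : 𝔤, -killingForm ℝ 𝔤 x (σ x) = 0 → x = 0 := by
    intro x hx
    by_contra h
    exact (hσpos x h).ne' hx
  -- positive definiteness on 𝔞
  have hposA : ∀ H : 𝔞, H ≠ 0 → 0 < killingForm ℝ 𝔤 (H : 𝔤) (H : 𝔤) := by
    intro H hH
    have h1 : ((H : 𝔤)) ≠ 0 := fun h => hH (Subtype.ext h)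
    have h2 := hσpos _ h1
    rw [h𝔞p _ H.2] at h2
    simpa using h2
  have hA0 : ∀ H : 𝔞, (∀ H' : 𝔞, killingForm ℝ 𝔤 (H : 𝔤) (H' : 𝔤) = 0) → H = 0 := by
    intro H h
    by_contra hne
    exact (hposA H hne).ne' (h H)
  -- root space basics
  have hσroot : ∀ (lam : Module.Dual ℝ 𝔞) (X : 𝔤), X ∈ rootSpace' 𝔞 lam →
      σ X ∈ rootSpace' 𝔞 (-lam) := by
    intro lam X hX H
    have h1 : σ ⁅(H : 𝔤), X⁆ = ⁅σ (H : 𝔤), σ X⁆ := σ.map_lie _ _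
    rw [hX H, h𝔞p _ H.2, map_smul, neg_lie] at h1
    have h2 : ⁅(H : 𝔤), σ X⁆ = -(lam H • σ X) := by rw [h1, neg_neg]
    rw [h2]
    simp
  have h𝔞root0 : ∀ a ∈ 𝔞, a ∈ rootSpace' 𝔞 (0 : Module.Dual ℝ 𝔞) := by
    intro a ha H
    rw [h𝔞ab _ _ H.2 ha]
    simp
  have hHvne : ∀ lam : Module.Dual ℝ 𝔞, lam ≠ 0 → Hv lam ≠ 0 := by
    intro lam hlam h0
    apply hlam
    ext H
    have := hHv lam H
    rw [h0] at this
    simpa using this.symm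
  have hHvNeg : ∀ lam : Module.Dual ℝ 𝔞, Hv (-lam) = -Hv lam := by
    intro lam
    have key : ∀ H' : 𝔞, killingForm ℝ 𝔤 ((Hv (-lam) + Hv lam : 𝔞) : 𝔤) (H' : 𝔤) = 0 := by
      intro H'
      push_cast
      rw [map_add, LinearMap.add_apply, hHv, hHv]
      simp
    have h0 := hA0 _ key
    have := eq_neg_of_add_eq_zero_left h0
    exact this

  -- sign dichotomy for roots
  have hNegPos : ∀ lam : Module.Dual ℝ 𝔞, lam ≠ 0 → rootSpace' 𝔞 lam ≠ ⊥ →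
      lam ∈ posRootSet 𝔞 φ Hv ∨ -lam ∈ posRootSet 𝔞 φ Hv := by
    intro lam hlam hroot
    classical
    have hHvl : Hv lam ≠ 0 := hHvne lam hlam
    have hex : ∃ k : Fin r, φ k (Hv lam) ≠ 0 := by
      by_contra h
      push_neg at h
      apply hHvl
      rw [← Module.forall_dual_apply_eq_zero_iff (R := ℝ)]
      intro f
      have hf := Module.Basis.sum_repr φ f
      rw [← hf, LinearMap.sum_apply]
      simp [h]
    set S : Finset (Fin r) := Finset.univ.filter (fun k => φ k (Hv lam) ≠ 0) with hS
    have hSne : S.Nonempty := by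
      obtain ⟨k, hk⟩ := hex
      exact ⟨k, by simp [hS, hk]⟩
    set k₀ := S.min' hSne with hk₀
    have hk₀S : k₀ ∈ S := S.min'_mem hSne
    have hk₀ne : φ k₀ (Hv lam) ≠ 0 := by simpa [hS] using hk₀S
    have hmin : ∀ j : Fin r, j < k₀ → φ j (Hv lam) = 0 := by
      intro j hj
      by_contra h
      have : j ∈ S := by simp [hS, h]
      exact absurd (S.min'_le j this) (not_le.mpr hj)
    rcases lt_or_gt_of_ne hk₀ne with hneg | hpos
    · right
      refine ⟨neg_ne_zero.mpr hlam, ?_, k₀, ?_, ?_⟩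
      · obtain ⟨X, hX, hX0⟩ := Submodule.exists_mem_ne_zero_of_ne_bot hroot
        have : σ X ∈ rootSpace' 𝔞 (-lam) := hσroot lam X hX
        intro hbot
        rw [hbot] at this
        simp only [Submodule.mem_bot] at this
        exact hX0 (hσinj (by rw [this, hσzero]))
      · rw [hHvNeg, map_neg]
        linarith
      · intro j hj
        rw [hHvNeg, map_neg, hmin j hj, neg_zero]
    · left
      exact ⟨hlam, hroot, k₀, hpos, hmin⟩
  have hPosSumNe : ∀ lam ∈ posRootSet 𝔞 φ Hv, ∀ mu ∈ posRootSet 𝔞 φ Hv, lam + mu ≠ 0 := by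
    rintro lam ⟨hl0, -, k, hk, hkz⟩ mu ⟨hm0, -, k', hk', hkz'⟩ hsum
    have hmu : mu = -lam := by
      rw [← neg_eq_of_add_eq_zero_right hsum]
    subst hmu
    rw [hHvNeg] at hk' hkz'
    rcases lt_trichotomy k k' with h | h | h
    · have := hkz' k h
      rw [map_neg] at this
      have := neg_eq_zero.mp this
      exact hk.ne' this
    · subst h
      rw [map_neg] at hk'
      linarith
    · have := hkz k' h
      rw [map_neg] at hk'
      rw [this] at hk'
      simp at hk'
  -- Killing-orthogonality of root spaces
  have l1 : ∀ lam mu : Module.Dual ℝ 𝔞, lam + mu ≠ 0 → ∀ X ∈ rootSpace' 𝔞 lam,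
      ∀ Y ∈ rootSpace' 𝔞 mu, killingForm ℝ 𝔤 X Y = 0 := by
    intro lam mu hne X hX Y hY
    obtain ⟨H, hH⟩ : ∃ H : 𝔞, (lam + mu) H ≠ 0 := by
      by_contra h
      push_neg at h
      exact hne (LinearMap.ext h)
    have e1 : killingForm ℝ 𝔤 ⁅(H : 𝔤), X⁆ Y = killingForm ℝ 𝔤 (H : 𝔤) ⁅X, Y⁆ := hκinv _ _ _
    have e2 : killingForm ℝ 𝔤 ⁅(H : 𝔤), Y⁆ X = killingForm ℝ 𝔤 (H : 𝔤) ⁅Y, X⁆ := hκinv _ _ _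
    rw [hX H] at e1
    rw [hY H] at e2
    rw [← lie_skew Y X, map_neg] at e2
    simp only [map_smul, LinearMap.smul_apply, smul_eq_mul] at e1 e2
    rw [hκsymm Y X] at e2
    have hmul : (lam H + mu H) * killingForm ℝ 𝔤 X Y = 0 := by
      rw [add_mul, e1]
      linarith
    have hs : (lam + mu) H = lam H + mu H := rfl
    rcases mul_eq_zero.mp hmul with h | h
    · exact absurd (hs.trans h) hH
    · exact h
  -- membership helpers
  have hA𝔰 : 𝔞.toSubmodule ≤ 𝔰.toSubmodule := by rw [h𝔰]; exact le_sup_left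
  have hN𝔰 : nSub 𝔞 φ Hv ≤ 𝔰.toSubmodule := by rw [h𝔰]; exact le_sup_right
  have hroot𝔰 : ∀ lam ∈ posRootSet 𝔞 φ Hv, rootSpace' 𝔞 lam ≤ nSub 𝔞 φ Hv := by
    intro lam hlam
    exact le_biSup _ hlam
  -- κ z n = 0 for z ∈ 𝔰, n ∈ 𝔫
  have korth : ∀ z ∈ 𝔰.toSubmodule, ∀ n ∈ nSub 𝔞 φ Hv, killingForm ℝ 𝔤 z n = 0 := by
    have step1 : ∀ lam ∈ posRootSet 𝔞 φ Hv, ∀ X ∈ rootSpace' 𝔞 lam,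
        ∀ z ∈ 𝔰.toSubmodule, killingForm ℝ 𝔤 z X = 0 := by
      intro lam hlam X hX
      have hle : 𝔰.toSubmodule ≤ LinearMap.ker ((killingForm ℝ 𝔤).flip X) := by
        rw [h𝔰]
        apply sup_le
        · intro a ha
          exact LinearMap.mem_ker.mpr (l1 0 lam (by simpa using hlam.1) a (h𝔞root0 a ha) X hX)
        · refine iSup₂_le fun mu hmu => ?_
          intro Y hY
          exact LinearMap.mem_ker.mpr (l1 mu lam (hPosSumNe mu hmu lam hlam) Y hY X hX)
      intro z hz
      exact LinearMap.mem_ker.mp (hle hz)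
    intro z hz n hn
    have hle : nSub 𝔞 φ Hv ≤ LinearMap.ker (killingForm ℝ 𝔤 z) :=
      iSup₂_le fun lam hlam => fun X hX => by
        rw [LinearMap.mem_ker]
        exact step1 lam hlam X hX z hz
    exact hle hn
  -- 𝔰 ∩ 𝔨 = 0
  have kAA : ∀ z ∈ 𝔰.toSubmodule, σ z = z → z = 0 := by
    intro z hz hσz
    have hz' := hz
    rw [h𝔰] at hz'
    obtain ⟨a, ha, n, hn, hzan⟩ := Submodule.mem_sup.mp hz'
    have ha𝔰 : a ∈ 𝔰.toSubmodule := hA𝔰 ha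
    have h1 : killingForm ℝ 𝔤 z z = killingForm ℝ 𝔤 a a := by
      have e1 : killingForm ℝ 𝔤 z n = 0 := korth z hz n hn
      have e2 : killingForm ℝ 𝔤 a n = 0 := korth a ha𝔰 n hn
      calc killingForm ℝ 𝔤 z z = killingForm ℝ 𝔤 z a + killingForm ℝ 𝔤 z n := by
            rw [← map_add, hzan]
        _ = killingForm ℝ 𝔤 a z := by rw [e1, add_zero, hκsymm]
        _ = killingForm ℝ 𝔤 a a + killingForm ℝ 𝔤 a n := by rw [← map_add, hzan]
        _ = killingForm ℝ 𝔤 a a := by rw [e2, add_zero]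
    have h2 : 0 ≤ killingForm ℝ 𝔤 a a := by
      have := hQ a
      rw [h𝔞p a ha] at this
      simpa using this
    have h3 := hQ z
    rw [hσz, h1] at h3
    apply hQ0
    rw [hσz, h1]
    linarith
  have projK : ∀ Y : 𝔤, σ Y = Y → proj Y = 0 := by
    intro Y hY
    have hS := hproj𝔨 Y
    have hσS : σ ((proj Y : 𝔰) : 𝔤) = ((proj Y : 𝔰) : 𝔤) := by
      have h1 : ((proj Y : 𝔰) : 𝔤) = Y - (Y - ((proj Y : 𝔰) : 𝔤)) := by abel
      rw [h1, hσsub, hY, hS]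
    have hz := kAA ((proj Y : 𝔰) : 𝔤) (proj Y).2 hσS
    exact Subtype.ext hz
  -- the span
  set W : Submodule ℝ 𝔰 :=
    Submodule.span ℝ {S : 𝔰 | ∃ X : 𝔰, ∃ Y : 𝔤, σ Y = Y ∧ S = proj ⁅(X : 𝔤), Y⁆} with hW
  set Wg : Submodule ℝ 𝔤 := W.map 𝔰.toSubmodule.subtype with hWg
  have hN : nSub 𝔞 φ Hv ≤ Wg := by
    refine iSup₂_le fun lam hlam => fun X hX => ?_
    obtain ⟨H0, hH0⟩ : ∃ H0 : 𝔞, lam H0 ≠ 0 := by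
      by_contra h
      push_neg at h
      exact hlam.1 (LinearMap.ext h)
    have hX𝔰 : X ∈ 𝔰.toSubmodule := hN𝔰 (hroot𝔰 lam hlam hX)
    set XS : 𝔰 := ⟨X, hX𝔰⟩ with hXS
    have hH𝔰 : ((H0 : 𝔤)) ∈ 𝔰.toSubmodule := hA𝔰 H0.2
    set HS : 𝔰 := ⟨(H0 : 𝔤), hH𝔰⟩ with hHS
    set Y := X + σ X with hYdef
    have hY : σ Y = Y := by rw [hYdef, hσadd, hσinv, add_comm]
    have hmem : proj ⁅(HS : 𝔤), Y⁆ ∈ W := Submodule.subset_span ⟨HS, Y, hY, rfl⟩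
    have hbr : ⁅(HS : 𝔤), Y⁆ = lam H0 • X - lam H0 • σ X := by
      show ⁅(H0 : 𝔤), Y⁆ = _
      rw [hYdef, lie_add, hX H0, hσroot lam X hX H0]
      simp [sub_eq_add_neg]
    have hprojX : proj X = XS := hproj𝔰 XS
    have hprojσX : proj (σ X) = -XS := by
      have hs : σ X = Y - X := by rw [hYdef]; abel
      rw [hs, map_sub, projK Y hY, hprojX, zero_sub]
    have hcalc : proj ⁅(HS : 𝔤), Y⁆ = (2 * lam H0) • XS := by
      rw [hbr, map_sub, map_smul, map_smul, hprojX, hprojσX, smul_neg, sub_neg_eq_add,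
        two_mul, add_smul]
    have hXg : (2 * lam H0) • X ∈ Wg := by
      refine ⟨proj ⁅(HS : 𝔤), Y⁆, hmem, ?_⟩
      rw [hcalc]
      rfl
    have h2ne : (2 : ℝ) * lam H0 ≠ 0 := mul_ne_zero two_ne_zero hH0
    have := Wg.smul_mem (2 * lam H0)⁻¹ hXg
    rwa [inv_smul_smul₀ h2ne] at this
  have hHvW : ∀ lam ∈ posRootSet 𝔞 φ Hv, ((Hv lam : 𝔞) : 𝔤) ∈ Wg := by
    intro lam hlam
    obtain ⟨X, hX, hX0⟩ := Submodule.exists_mem_ne_zero_of_ne_bot hlam.2.1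
    set z := ⁅X, σ X⁆ with hzdef
    have p1 : ∀ H : 𝔞, ⁅(H : 𝔤), z⁆ = 0 := by
      intro H
      rw [hzdef, leibniz_lie, hX H, hσroot lam X hX H, lie_smul, smul_lie]
      simp
    have p2 : σ z = -z := by
      rw [hzdef, σ.map_lie, hσinv, ← lie_skew]
    have hza : ∀ c ∈ 𝔞, ⁅z, c⁆ = 0 := fun c hc => by
      rw [← lie_skew, p1 ⟨c, hc⟩, neg_zero]
    have habel : ∀ x ∈ 𝔞.toSubmodule ⊔ (ℝ ∙ z), ∀ y ∈ 𝔞.toSubmodule ⊔ (ℝ ∙ z),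
        ⁅x, y⁆ = 0 := by
      intro x hx y hy
      obtain ⟨a, ha, x', hx', rfl⟩ := Submodule.mem_sup.mp hx
      obtain ⟨b, hb, y', hy', rfl⟩ := Submodule.mem_sup.mp hy
      obtain ⟨t, rfl⟩ := Submodule.mem_span_singleton.mp hx'
      obtain ⟨u, rfl⟩ := Submodule.mem_span_singleton.mp hy'
      simp only [add_lie, lie_add, lie_smul, smul_lie]
      rw [h𝔞ab a b ha hb, p1 ⟨a, ha⟩, hza b hb, lie_self]
      simp
    set 𝔟 : LieSubalgebra ℝ 𝔤 :=
      { 𝔞.toSubmodule ⊔ (ℝ ∙ z) with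
        lie_mem' := fun {x y} hx hy => by
          rw [habel x hx y hy]
          exact Submodule.zero_mem _ } with h𝔟def
    have h𝔟mem : ∀ w : 𝔤, w ∈ 𝔟 ↔ w ∈ 𝔞.toSubmodule ⊔ (ℝ ∙ z) := fun w => Iff.rfl
    have h𝔟σ : ∀ x ∈ 𝔟, σ x = -x := by
      intro x hx
      obtain ⟨a, ha, x', hx', rfl⟩ := Submodule.mem_sup.mp ((h𝔟mem x).mp hx)
      obtain ⟨t, rfl⟩ := Submodule.mem_span_singleton.mp hx'
      rw [hσadd, map_smul, h𝔞p a ha, p2, smul_neg, neg_add]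
    have h𝔞𝔟 : 𝔞 ≤ 𝔟 := fun x hx => (h𝔟mem x).mpr (Submodule.mem_sup_left hx)
    have h𝔟eq := h𝔞max 𝔟 (fun x y hx hy => habel x hx y hy) h𝔟σ h𝔞𝔟
    have p3 : z ∈ 𝔞 := by
      rw [← h𝔟eq]
      exact (h𝔟mem z).mpr (Submodule.mem_sup_right (Submodule.mem_span_singleton_self z))
    set c := killingForm ℝ 𝔤 X (σ X) with hc
    have hcne : c ≠ 0 := by
      have := hσpos X hX0
      intro h
      rw [← hc, h] at this
      simp at this
    have p4 : ∀ H : 𝔞, killingForm ℝ 𝔤 z (H : 𝔤) = c * lam H := by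
      intro H
      rw [hzdef, hκinv]
      have hbr : ⁅σ X, (H : 𝔤)⁆ = lam H • σ X := by
        rw [← lie_skew, hσroot lam X hX H]
        simp
      rw [hbr, map_smul, smul_eq_mul, ← hc, mul_comm]
    have p5 : z = c • ((Hv lam : 𝔞) : 𝔤) := by
      have hd : ∀ H' : 𝔞, killingForm ℝ 𝔤 (((⟨z, p3⟩ : 𝔞) - c • Hv lam : 𝔞) : 𝔤) (H' : 𝔤) = 0 := by
        intro H'
        have hco : (((⟨z, p3⟩ : 𝔞) - c • Hv lam : 𝔞) : 𝔤) = z - c • ((Hv lam : 𝔞) : 𝔤) := rfl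
        rw [hco, map_sub, LinearMap.sub_apply, map_smul, LinearMap.smul_apply, smul_eq_mul,
          hHv, p4]
        ring
      have h0 := hA0 _ hd
      rw [sub_eq_zero] at h0
      calc z = (((⟨z, p3⟩ : 𝔞) : 𝔤)) := rfl
        _ = ((c • Hv lam : 𝔞) : 𝔤) := by rw [h0]
        _ = c • ((Hv lam : 𝔞) : 𝔤) := rfl
    have hX𝔰 : X ∈ 𝔰.toSubmodule := hN𝔰 (hroot𝔰 lam hlam hX)
    set XS : 𝔰 := ⟨X, hX𝔰⟩ with hXS
    set Y := X + σ X with hYdef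
    have hY : σ Y = Y := by rw [hYdef, hσadd, hσinv, add_comm]
    have hz𝔰 : z ∈ 𝔰.toSubmodule := hA𝔰 p3
    have hbr : ⁅(XS : 𝔤), Y⁆ = z := by
      show ⁅X, Y⁆ = z
      rw [hYdef, lie_add, lie_self, zero_add, hzdef]
    have hprojz : proj ⁅(XS : 𝔤), Y⁆ = ⟨z, hz𝔰⟩ := by
      rw [hbr]
      exact hproj𝔰 ⟨z, hz𝔰⟩
    have hmem : (⟨z, hz𝔰⟩ : 𝔰) ∈ W := by
      rw [← hprojz]
      exact Submodule.subset_span ⟨XS, Y, hY, rfl⟩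
    have hzWg : z ∈ Wg := ⟨⟨z, hz𝔰⟩, hmem, rfl⟩
    have hsm := Wg.smul_mem c⁻¹ hzWg
    rw [p5, inv_smul_smul₀ hcne] at hsm
    exact hsm
  have hAW : 𝔞.toSubmodule ≤ Wg := by
    classical
    set Vset : Set 𝔞 := {H : 𝔞 | ∃ lam ∈ posRootSet 𝔞 φ Hv, H = Hv lam} with hVset
    have hVtop : Submodule.span ℝ Vset = ⊤ := by
      by_contra hne
      have hlt : Submodule.span ℝ Vset < ⊤ := lt_top_iff_ne_top.mpr hne
      obtain ⟨x, -, hx⟩ := SetLike.exists_of_lt hlt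
      obtain ⟨f, hfx, hfbot⟩ := Submodule.exists_dual_map_eq_bot_of_notMem hx inferInstance
      have hfV : ∀ v ∈ Submodule.span ℝ Vset, f v = 0 := by
        intro v hv
        have hm : f v ∈ Submodule.map f (Submodule.span ℝ Vset) := Submodule.mem_map_of_mem hv
        rw [hfbot] at hm
        simpa using hm
      -- Riesz representation via the Killing form
      let ι𝔞 : 𝔞 →ₗ[ℝ] 𝔤 :=
        { toFun := fun H => (H : 𝔤)
          map_add' := fun _ _ => rfl
          map_smul' := fun _ _ => rfl }
      let Bf : 𝔞 →ₗ[ℝ] Module.Dual ℝ 𝔞 := (killingForm ℝ 𝔤).compl₁₂ ι𝔞 ι𝔞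
      have hBfapp : ∀ (H H' : 𝔞), Bf H H' = killingForm ℝ 𝔤 (H : 𝔤) (H' : 𝔤) := fun _ _ => rfl
      have hBfinj : Function.Injective Bf := by
        rw [← LinearMap.ker_eq_bot, Submodule.eq_bot_iff]
        intro H hH
        refine hA0 H fun H' => ?_
        rw [← hBfapp, LinearMap.mem_ker.mp hH]
        rfl
      have hBfsurj : Function.Surjective Bf :=
        (LinearMap.injective_iff_surjective_of_finrank_eq_finrank
          (Subspace.dual_finrank_eq (K := ℝ) (V := 𝔞)).symm).mp hBfinj
      obtain ⟨H0, hH0f⟩ := hBfsurj f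
      have hH0ne : H0 ≠ 0 := by
        rintro rfl
        rw [map_zero] at hH0f
        rw [← hH0f] at hfx
        simp at hfx
      have hlamH0 : ∀ lam : Module.Dual ℝ 𝔞, lam ≠ 0 → rootSpace' 𝔞 lam ≠ ⊥ →
          lam H0 = 0 := by
        intro lam hl hr
        have key : ∀ mu ∈ posRootSet 𝔞 φ Hv, mu H0 = 0 := by
          intro mu hmu
          have hv : Hv mu ∈ Submodule.span ℝ Vset :=
            Submodule.subset_span ⟨mu, hmu, rfl⟩
          have h1 := hfV _ hv
          rw [← hH0f, hBfapp] at h1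
          rw [← hHv mu H0, hκsymm]
          exact h1
        rcases hNegPos lam hl hr with h | h
        · exact key lam h
        · have := key _ h
          simpa using this
      -- joint eigenspace decomposition shows ad H0 = 0
      set m := Module.finrank ℝ 𝔞 with hm
      let b : Module.Basis (Fin m) ℝ 𝔞 := Module.finBasis ℝ 𝔞
      let T : Fin m → (𝔤 →ₗ[ℝ] 𝔤) := fun i => LieAlgebra.ad ℝ 𝔤 ((b i : 𝔤))
      let B : 𝔤 →ₗ[ℝ] 𝔤 →ₗ[ℝ] ℝ := -((killingForm ℝ 𝔤).compl₂ (σ : 𝔤 →ₗ[ℝ] 𝔤))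
      have hBapp : ∀ x y : 𝔤, B x y = -killingForm ℝ 𝔤 x (σ y) := fun _ _ => rfl
      have hBsymm : ∀ x y : 𝔤, B x y = B y x := by
        intro x y
        rw [hBapp, hBapp, ← hκσ x (σ y), hσinv, hκsymm]
      have hBpos : ∀ x : 𝔤, x ≠ 0 → 0 < B x x := fun x hx => by
        rw [hBapp]
        exact hσpos x hx
      have hsymmad : ∀ (H : 𝔞) (x y : 𝔤), B ⁅(H : 𝔤), x⁆ y = B x ⁅(H : 𝔤), y⁆ := by
        intro H x y
        have h1 : killingForm ℝ 𝔤 ⁅(H : 𝔤), x⁆ (σ y) = -killingForm ℝ 𝔤 x ⁅(H : 𝔤), σ y⁆ := by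
          have e : killingForm ℝ 𝔤 ⁅x, (H : 𝔤)⁆ (σ y) = killingForm ℝ 𝔤 x ⁅(H : 𝔤), σ y⁆ :=
            hκinv _ _ _
          have e2 : ⁅(H : 𝔤), x⁆ = -⁅x, (H : 𝔤)⁆ := (lie_skew (H : 𝔤) x).symm
          rw [e2, map_neg, LinearMap.neg_apply, e]
        have h2 : σ ⁅(H : 𝔤), y⁆ = -⁅(H : 𝔤), σ y⁆ := by
          rw [σ.map_lie, h𝔞p _ H.2, neg_lie]
        rw [hBapp, hBapp, h1, h2]
        simp only [map_neg, neg_neg]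
      have hTcomm : Pairwise (Function.onFun Commute T) := by
        intro i j _
        show T i * T j = T j * T i
        ext w
        show ⁅((b i : 𝔞) : 𝔤), ⁅((b j : 𝔞) : 𝔤), w⁆⁆ = ⁅((b j : 𝔞) : 𝔤), ⁅((b i : 𝔞) : 𝔤), w⁆⁆
        rw [leibniz_lie, h𝔞ab _ _ (b i).2 (b j).2, zero_lie, zero_add]
      have htop := jointEig B hBsymm hBpos T (fun i x y => hsymmad (b i) x y) hTcomm
      have hker : ∀ χ : Fin m → ℝ,
          (⨅ i, Module.End.eigenspace (T i) (χ i)) ≤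
            LinearMap.ker (LieAlgebra.ad ℝ 𝔤 ((H0 : 𝔤))) := by
        intro χ X hX
        set lamχ : Module.Dual ℝ 𝔞 := ∑ i, χ i • b.coord i with hlamχ
        have hXi : ∀ i, ⁅((b i : 𝔞) : 𝔤), X⁆ = χ i • X := fun i =>
          Module.End.mem_eigenspace_iff.mp ((Submodule.mem_iInf _).mp hX i)
        have hXroot : X ∈ rootSpace' 𝔞 lamχ := by
          let F1 : 𝔞 →ₗ[ℝ] 𝔤 :=
            { toFun := fun H => ⁅(H : 𝔤), X⁆
              map_add' := fun u v => by
                have : ((u + v : 𝔞) : 𝔤) = (u : 𝔤) + (v : 𝔤) := rfl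
                simp only [this, add_lie]
              map_smul' := fun t u => by
                have : ((t • u : 𝔞) : 𝔤) = t • (u : 𝔤) := rfl
                simp only [this, smul_lie, RingHom.id_apply] }
          have hcoordb : ∀ i, lamχ (b i) = χ i := by
            intro i
            rw [hlamχ, LinearMap.sum_apply]
            simp only [LinearMap.smul_apply, Module.Basis.coord_apply, Module.Basis.repr_self,
              smul_eq_mul, Finsupp.single_apply]
            simp
          have heq : F1 = lamχ.smulRight X := by
            apply Module.Basis.ext b
            intro i
            show ⁅((b i : 𝔞) : 𝔤), X⁆ = lamχ (b i) • X
            rw [hXi i, hcoordb i]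
          intro H
          have := LinearMap.congr_fun heq H
          exact this
        rw [LinearMap.mem_ker, LieAlgebra.ad_apply]
        rcases eq_or_ne lamχ 0 with h0 | h0
        · have := hXroot H0
          rw [h0] at this
          simpa using this
        · rcases eq_or_ne X 0 with rfl | hX0
          · simp
          · have hrootne : rootSpace' 𝔞 lamχ ≠ ⊥ := by
              intro hbot
              rw [hbot] at hXroot
              exact hX0 (Submodule.mem_bot ℝ |>.mp hXroot)
            have := hXroot H0
            rw [hlamH0 lamχ h0 hrootne] at this
            simpa using this
      have had0 : LieAlgebra.ad ℝ 𝔤 ((H0 : 𝔤)) = 0 := by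
        apply LinearMap.ext
        intro w
        have hw : w ∈ ⨆ χ : Fin m → ℝ, ⨅ i, Module.End.eigenspace (T i) (χ i) :=
          htop ▸ Submodule.mem_top
        have := (iSup_le hker) hw
        simpa using this
      have hκH0 : killingForm ℝ 𝔤 (H0 : 𝔤) (H0 : 𝔤) = 0 := by
        rw [killingForm_apply_apply, had0]
        simp
      exact absurd hκH0 (hposA H0 hH0ne).ne'
    -- conclude: every element of 𝔞 lies in Wg
    intro a ha
    have hmem : (⟨a, ha⟩ : 𝔞) ∈ Submodule.span ℝ Vset := hVtop ▸ Submodule.mem_top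
    have key : ∀ H : 𝔞, H ∈ Submodule.span ℝ Vset → ((H : 𝔤)) ∈ Wg := by
      intro H hH
      refine Submodule.span_induction ?_ ?_ ?_ ?_ hH
      · rintro x ⟨lam, hlam, rfl⟩
        exact hHvW lam hlam
      · simpa using Wg.zero_mem
      · intro x y _ _ hx hy
        exact Wg.add_mem hx hy
      · intro t x _ hx
        exact Wg.smul_mem t hx
    exact key ⟨a, ha⟩ hmem
  have hSW : 𝔰.toSubmodule ≤ Wg := by rw [h𝔰]; exact sup_le hAW hN
  have htop : W = ⊤ := by
    rw [eq_top_iff]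
    intro s _
    have hs : (s : 𝔤) ∈ Wg := hSW s.2
    obtain ⟨w, hw, hwe⟩ := hs
    have : w = s := Subtype.ext hwe
    rwa [this] at hw
  refine ⟨htop, ?_⟩
  intro α hα
  ext s
  have hs : s ∈ W := htop ▸ Submodule.mem_top
  simp only [LinearMap.zero_apply]
  refine Submodule.span_induction ?_ ?_ ?_ ?_ hs
  · rintro x ⟨X, Y, hY, rfl⟩
    exact hα X Y hY
  · simp
  · intro x y _ _ hx hy
    rw [map_add, hx, hy, add_zero]
  · intro t x _ hx
    rw [map_smul, hx, smul_zero]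
end

section
/- An antisymmetric ℝ-bilinear map c : 𝔰 × 𝔰 → ℂ is a Chevalley–Eilenberg 2-cocycle for the trivial representation of 𝔰 on ℂ if and only if it satisfies the following four conditions: (i) c(v, E_j) = 0 and 2·c(v, v') = Ω_j(v, v')·c(H_j, E_j) for all 1 ≤ j ≤ r and v, v' ∈ V_j; (ii) c(X, E_j) = 0 for all 1 ≤ j < r and X ∈ 𝔰_r ⊕ … ⊕ 𝔰_{j+1}; (ii') c(X, v) = c(H_j, [X, v]) for all 1 ≤ j < r, X ∈ 𝔰_r ⊕ … ⊕ 𝔰_{j+1} and v ∈ V_j; (iii) c(v, H_j) = 0 and c(E_k, H_j) = 0 for all 1 ≤ j < k ≤ r and v ∈ V_k. -/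
variable {r : ℕ} {𝔰 : Type} [LieRing 𝔰] [LieAlgebra ℝ 𝔰]

/-- The `j`-th block `𝔰_j = ℝH_j ⊕ V_j ⊕ ℝE_j` of the Pyatetskii–Shapiro decomposition. -/
def psBlock (H E : Fin r → 𝔰) (V : Fin r → Submodule ℝ 𝔰) (j : Fin r) : Submodule ℝ 𝔰 :=
  Submodule.span ℝ {H j} ⊔ V j ⊔ Submodule.span ℝ {E j}

/-- The subspace `𝔰_r ⊕ … ⊕ 𝔰_{j+1}`. -/
def psUpper (H E : Fin r → 𝔰) (V : Fin r → Submodule ℝ 𝔰) (j : Fin r) : Submodule ℝ 𝔰 :=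
  ⨆ k : Fin r, ⨆ _ : j < k, psBlock H E V k

/-- `𝔰` is a Lie algebra in Pyatetskii–Shapiro normal form of rank `r`, with data
`H_j, E_j, V_j, Ω_j`. -/
structure IsPSAlgebra (H E : Fin r → 𝔰) (V : Fin r → Submodule ℝ 𝔰)
    (Ω : Fin r → 𝔰 →ₗ[ℝ] 𝔰 →ₗ[ℝ] ℝ) : Prop where
  /-- the rank is at least one -/
  rank_pos : 0 < r
  /-- as a vector space, `𝔰` is the direct sum of the blocks `𝔰_j` … -/
  total : (⨆ j, psBlock H E V j) = ⊤
  indep : iSupIndep (psBlock H E V)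
  /-- … and each block is the internal direct sum `ℝH_j ⊕ V_j ⊕ ℝE_j` -/
  inner_indep : ∀ (j : Fin r) (a b : ℝ), ∀ v ∈ V j,
    a • H j + v + b • E j = 0 → a = 0 ∧ v = 0 ∧ b = 0
  /-- `Ω_j` is antisymmetric on `V_j` … -/
  omega_anti : ∀ j, ∀ v ∈ V j, ∀ w ∈ V j, Ω j v w = - Ω j w v
  /-- … and nondegenerate on `V_j` -/
  omega_nondeg : ∀ j, ∀ v ∈ V j, (∀ w ∈ V j, Ω j v w = 0) → v = 0
  /-- `[v, E_j] = 0` for `v ∈ V_j` -/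
  lie_vE : ∀ j, ∀ v ∈ V j, ⁅v, E j⁆ = 0
  /-- `[v, v'] = Ω_j(v, v') • E_j` for `v, v' ∈ V_j` -/
  lie_vv : ∀ j, ∀ v ∈ V j, ∀ w ∈ V j, ⁅v, w⁆ = Ω j v w • E j
  /-- `[H_j, v + z•E_j] = v + 2z•E_j` -/
  lie_H : ∀ j, ∀ v ∈ V j, ∀ z : ℝ, ⁅H j, v + z • E j⁆ = v + (2 * z) • E j
  /-- `[X, H_j] = 0` for `X ∈ 𝔰_r ⊕ … ⊕ 𝔰_{j+1}` -/
  lie_upper_H : ∀ j, ∀ X ∈ psUpper H E V j, ⁅X, H j⁆ = 0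
  /-- `[X, E_j] = 0` for `X ∈ 𝔰_r ⊕ … ⊕ 𝔰_{j+1}` -/
  lie_upper_E : ∀ j, ∀ X ∈ psUpper H E V j, ⁅X, E j⁆ = 0
  /-- `[X, V_j] ⊆ V_j` for `X ∈ 𝔰_r ⊕ … ⊕ 𝔰_{j+1}` -/
  lie_upper_V : ∀ j, ∀ X ∈ psUpper H E V j, ∀ v ∈ V j, ⁅X, v⁆ ∈ V j
  /-- `ad_X ∈ 𝔰𝔭(V_j, Ω_j)` for `X ∈ 𝔰_r ⊕ … ⊕ 𝔰_{j+1}` -/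
  omega_invar : ∀ j, ∀ X ∈ psUpper H E V j, ∀ v ∈ V j, ∀ w ∈ V j,
    Ω j ⁅X, v⁆ w + Ω j v ⁅X, w⁆ = 0

/-- `c` is a Chevalley–Eilenberg 2-cocycle on `𝔰` for the trivial representation on `ℂ`. -/
def IsCE2Cocycle (c : 𝔰 →ₗ[ℝ] 𝔰 →ₗ[ℝ] ℂ) : Prop :=
  (∀ X Y : 𝔰, c X Y = - c Y X) ∧
  (∀ X Y Z : 𝔰, c ⁅X, Y⁆ Z + c ⁅Y, Z⁆ X + c ⁅Z, X⁆ Y = 0)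

/-- `c` is a Chevalley–Eilenberg 2-coboundary on `𝔰` for the trivial representation on `ℂ`. -/
def IsCE2Coboundary (c : 𝔰 →ₗ[ℝ] 𝔰 →ₗ[ℝ] ℂ) : Prop :=
  ∃ α : 𝔰 →ₗ[ℝ] ℂ, ∀ X Y : 𝔰, c X Y = α ⁅X, Y⁆

section PSAux

variable {r : ℕ} {𝔰 : Type} [LieRing 𝔰] [LieAlgebra ℝ 𝔰]
variable {H E : Fin r → 𝔰} {V : Fin r → Submodule ℝ 𝔰} {Ω : Fin r → 𝔰 →ₗ[ℝ] 𝔰 →ₗ[ℝ] ℝ}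

lemma psH_mem (j : Fin r) : H j ∈ psBlock H E V j :=
  Submodule.mem_sup_left (Submodule.mem_sup_left (Submodule.mem_span_singleton_self _))

lemma psE_mem (j : Fin r) : E j ∈ psBlock H E V j :=
  Submodule.mem_sup_right (Submodule.mem_span_singleton_self _)

lemma psV_le (j : Fin r) : V j ≤ psBlock H E V j :=
  le_sup_of_le_left le_sup_right

lemma psBlock_le_upper {j k : Fin r} (h : j < k) :
    psBlock H E V k ≤ psUpper H E V j :=
  le_iSup_of_le k (le_iSup_of_le h le_rfl)

lemma ps_decomp {j : Fin r} {x : 𝔰} (hx : x ∈ psBlock H E V j) :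
    ∃ a b : ℝ, ∃ v ∈ V j, x = a • H j + v + b • E j := by
  rcases Submodule.mem_sup.mp hx with ⟨y, hy, e, he, rfl⟩
  rcases Submodule.mem_sup.mp hy with ⟨h', hh', v, hv, rfl⟩
  rcases Submodule.mem_span_singleton.mp hh' with ⟨a, rfl⟩
  rcases Submodule.mem_span_singleton.mp he with ⟨b, rfl⟩
  exact ⟨a, b, v, hv, rfl⟩

lemma ps_upper_induction {j : Fin r} {C : 𝔰 → Prop} {x : 𝔰}
    (hx : x ∈ psUpper H E V j)
    (hblock : ∀ k, j < k → ∀ y ∈ psBlock H E V k, C y)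
    (h0 : C 0) (hadd : ∀ a b, C a → C b → C (a + b)) : C x := by
  refine Submodule.iSup_induction (motive := C) _ hx ?_ h0 hadd
  intro k y hy
  by_cases h : j < k
  · rw [iSup_pos h] at hy; exact hblock k h y hy
  · rw [iSup_neg h, Submodule.mem_bot] at hy; subst hy; exact h0

lemma ps_br_Hv (P : IsPSAlgebra H E V Ω) (j : Fin r) {v : 𝔰} (hv : v ∈ V j) :
    ⁅H j, v⁆ = v := by
  have h := P.lie_H j v hv 0
  simpa using h

lemma ps_br_HE (P : IsPSAlgebra H E V Ω) (j : Fin r) : ⁅H j, E j⁆ = (2 : ℝ) • E j := by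
  have h := P.lie_H j 0 (V j).zero_mem 1
  simpa using h

lemma ps_br_upper_low (P : IsPSAlgebra H E V Ω) {j : Fin r} {X y : 𝔰}
    (hX : X ∈ psUpper H E V j) (hy : y ∈ psBlock H E V j) : ⁅X, y⁆ ∈ V j := by
  obtain ⟨a, b, v, hv, rfl⟩ := ps_decomp hy
  have h1 := P.lie_upper_H j X hX
  have h2 := P.lie_upper_E j X hX
  have h3 := P.lie_upper_V j X hX v hv
  simpa [lie_add, lie_smul, h1, h2] using h3

/-- The "derived" part of the upper algebra: `⨆_{k>j} (V_k ⊕ ℝE_k)`. -/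
def psDer (H E : Fin r → 𝔰) (V : Fin r → Submodule ℝ 𝔰) (j : Fin r) : Submodule ℝ 𝔰 :=
  ⨆ k : Fin r, ⨆ _ : j < k, (V k ⊔ Submodule.span ℝ {E k})

lemma psDer_le {j k : Fin r} (h : j < k) :
    V k ⊔ Submodule.span ℝ {E k} ≤ psDer H E V j :=
  le_iSup_of_le k (le_iSup_of_le h le_rfl)

lemma psDer_le_upper {j : Fin r} : psDer H E V j ≤ psUpper H E V j := by
  refine iSup_le fun k => iSup_le fun h => ?_
  exact (sup_le (psV_le k) le_sup_right).trans (psBlock_le_upper h)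

lemma ps_der_induction {j : Fin r} {C : 𝔰 → Prop} {x : 𝔰}
    (hx : x ∈ psDer H E V j)
    (hblock : ∀ k, j < k → ∀ y ∈ V k ⊔ Submodule.span ℝ {E k}, C y)
    (h0 : C 0) (hadd : ∀ a b, C a → C b → C (a + b)) : C x := by
  refine Submodule.iSup_induction (motive := C) _ hx ?_ h0 hadd
  intro k y hy
  by_cases h : j < k
  · rw [iSup_pos h] at hy; exact hblock k h y hy
  · rw [iSup_neg h, Submodule.mem_bot] at hy; subst hy; exact h0

lemma ps_br_same (P : IsPSAlgebra H E V Ω) {j : Fin r} {x y : 𝔰}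
    (hx : x ∈ psBlock H E V j) (hy : y ∈ psBlock H E V j) :
    ⁅x, y⁆ ∈ V j ⊔ Submodule.span ℝ {E j} := by
  obtain ⟨a, b, v, hv, rfl⟩ := ps_decomp hx
  obtain ⟨a', b', w, hw, rfl⟩ := ps_decomp hy
  have hHv := ps_br_Hv P j hv
  have hHw := ps_br_Hv P j hw
  have hvE := P.lie_vE j v hv
  have hwE := P.lie_vE j w hw
  have hvw := P.lie_vv j v hv w hw
  have hvH : ⁅v, H j⁆ = -v := by rw [← lie_skew, hHv]
  have hwH : ⁅w, H j⁆ = -w := by rw [← lie_skew, hHw]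
  have hEH : ⁅E j, H j⁆ = -((2:ℝ) • E j) := by rw [← lie_skew, ps_br_HE P j]
  have hEw : ⁅E j, w⁆ = 0 := by rw [← lie_skew, hwE, neg_zero]
  have key : ⁅a • H j + v + b • E j, a' • H j + w + b' • E j⁆
      = (a • w - a' • v) + (2 * (a * b') - 2 * (a' * b) + Ω j v w) • E j := by
    simp only [add_lie, lie_add, smul_lie, lie_smul, lie_self, smul_zero,
      hHw, ps_br_HE P j, hvH, hwH, hvw, hvE, hEH, hEw, zero_add, add_zero,
      smul_neg, smul_smul]
    module
  rw [key]
  exact Submodule.add_mem _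
    (Submodule.mem_sup_left
      (Submodule.sub_mem _ (Submodule.smul_mem _ _ hw) (Submodule.smul_mem _ _ hv)))
    (Submodule.mem_sup_right (Submodule.smul_mem _ _ (Submodule.mem_span_singleton_self _)))

lemma ps_br_upper_upper (P : IsPSAlgebra H E V Ω) {j : Fin r} {x y : 𝔰}
    (hx : x ∈ psUpper H E V j) (hy : y ∈ psUpper H E V j) :
    ⁅x, y⁆ ∈ psDer H E V j := by
  refine ps_upper_induction (C := fun y => ⁅x, y⁆ ∈ psDer H E V j) hy ?_ (by simp) ?_
  · intro k hk y' hy'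
    refine ps_upper_induction (C := fun x => ⁅x, y'⁆ ∈ psDer H E V j) hx ?_ (by simp) ?_
    · intro l hl x' hx'
      rcases lt_trichotomy l k with h | h | h
      · have h2 : ⁅y', x'⁆ ∈ V l := ps_br_upper_low P ((psBlock_le_upper h) hy') hx'
        rw [← lie_skew]
        exact Submodule.neg_mem _ (psDer_le hl (Submodule.mem_sup_left h2))
      · subst h
        exact psDer_le hl (ps_br_same P hx' hy')
      · have h2 : ⁅x', y'⁆ ∈ V k := ps_br_upper_low P ((psBlock_le_upper h) hx') hy'
        exact psDer_le hk (Submodule.mem_sup_left h2)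
    · intro a b ha hb; rw [add_lie]; exact Submodule.add_mem _ ha hb
  · intro a b ha hb; rw [lie_add]; exact Submodule.add_mem _ ha hb

end PSAux

section JcAux

variable {r : ℕ} {𝔰 : Type} [LieRing 𝔰] [LieAlgebra ℝ 𝔰]

/-- The cocycle defect. -/
noncomputable def Jc (c : 𝔰 →ₗ[ℝ] 𝔰 →ₗ[ℝ] ℂ) (X Y Z : 𝔰) : ℂ :=
  c ⁅X, Y⁆ Z + c ⁅Y, Z⁆ X + c ⁅Z, X⁆ Y

variable (c : 𝔰 →ₗ[ℝ] 𝔰 →ₗ[ℝ] ℂ)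

omit [LieAlgebra ℝ 𝔰] in
lemma lie_skew' (a b : 𝔰) : ⁅a, b⁆ = -⁅b, a⁆ := by rw [← lie_skew]

lemma Jc_cyc (x y z : 𝔰) : Jc c x y z = Jc c y z x := by
  simp only [Jc]; ring

lemma Jc_swap12 (x y z : 𝔰) : Jc c x y z = - Jc c y x z := by
  simp only [Jc]
  rw [lie_skew' y x, lie_skew' x z, lie_skew' z y]
  simp only [map_neg, LinearMap.neg_apply]
  ring

lemma Jc_swap23 (x y z : 𝔰) : Jc c x y z = - Jc c x z y := by
  rw [Jc_swap12 c x z y, neg_neg, Jc_cyc c z x y]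

lemma Jc_swap13 (x y z : 𝔰) : Jc c x y z = - Jc c z y x := by
  rw [Jc_swap12 c z y x, neg_neg, ← Jc_cyc c x y z]

lemma Jc_deg12 (x z : 𝔰) : Jc c x x z = 0 := by
  have h := Jc_swap12 c x x z
  linear_combination h / 2

lemma Jc_deg23 (x y : 𝔰) : Jc c x y y = 0 := by
  have h := Jc_swap23 c x y y
  linear_combination h / 2

lemma Jc_deg13 (x y : 𝔰) : Jc c x y x = 0 := by
  have h := Jc_swap13 c x y x
  linear_combination h / 2

lemma Jc_zero3 (x y : 𝔰) : Jc c x y 0 = 0 := by simp [Jc]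

lemma Jc_add3 (x y a b : 𝔰) : Jc c x y (a + b) = Jc c x y a + Jc c x y b := by
  simp only [Jc, lie_add, add_lie, map_add, LinearMap.add_apply]; ring

lemma Jc_smul3 (t : ℝ) (x y a : 𝔰) : Jc c x y (t • a) = t • Jc c x y a := by
  simp only [Jc, lie_smul, smul_lie, map_smul, LinearMap.smul_apply, Complex.real_smul]
  ring

lemma Jc_zero2 (x z : 𝔰) : Jc c x 0 z = 0 := by simp [Jc]

lemma Jc_add2 (x a b z : 𝔰) : Jc c x (a + b) z = Jc c x a z + Jc c x b z := by
  simp only [Jc, lie_add, add_lie, map_add, LinearMap.add_apply]; ring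

lemma Jc_smul2 (t : ℝ) (x a z : 𝔰) : Jc c x (t • a) z = t • Jc c x a z := by
  simp only [Jc, lie_smul, smul_lie, map_smul, LinearMap.smul_apply, Complex.real_smul]
  ring

lemma Jc_zero1 (y z : 𝔰) : Jc c 0 y z = 0 := by simp [Jc]

lemma Jc_add1 (a b y z : 𝔰) : Jc c (a + b) y z = Jc c a y z + Jc c b y z := by
  simp only [Jc, lie_add, add_lie, map_add, LinearMap.add_apply]; ring

lemma Jc_smul1 (t : ℝ) (a y z : 𝔰) : Jc c (t • a) y z = t • Jc c a y z := by
  simp only [Jc, lie_smul, smul_lie, map_smul, LinearMap.smul_apply, Complex.real_smul]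
  ring

end JcAux

section PSBackward

variable {r : ℕ} {𝔰 : Type} [LieRing 𝔰] [LieAlgebra ℝ 𝔰]
variable {H E : Fin r → 𝔰} {V : Fin r → Submodule ℝ 𝔰} {Ω : Fin r → 𝔰 →ₗ[ℝ] 𝔰 →ₗ[ℝ] ℝ}

set_option maxHeartbeats 1000000 in
lemma ps_backward (P : IsPSAlgebra H E V Ω) (c : 𝔰 →ₗ[ℝ] 𝔰 →ₗ[ℝ] ℂ)
    (hanti : ∀ X Y : 𝔰, c X Y = - c Y X)
    (hi1 : ∀ j, ∀ v ∈ V j, c v (E j) = 0)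
    (hi2 : ∀ j, ∀ v ∈ V j, ∀ v' ∈ V j, (2 : ℂ) * c v v' = Ω j v v' • c (H j) (E j))
    (hii : ∀ j, ∀ X ∈ psUpper H E V j, c X (E j) = 0)
    (hii' : ∀ j, ∀ X ∈ psUpper H E V j, ∀ v ∈ V j, c X v = c (H j) ⁅X, v⁆)
    (hiii1 : ∀ j k : Fin r, j < k → ∀ v ∈ V k, c v (H j) = 0)
    (hiii2 : ∀ j k : Fin r, j < k → c (E k) (H j) = 0)
    (X Y Z : 𝔰) : c ⁅X, Y⁆ Z + c ⁅Y, Z⁆ X + c ⁅Z, X⁆ Y = 0 := by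
  have hcDH : ∀ j : Fin r, ∀ W ∈ psDer H E V j, c W (H j) = 0 := by
    intro j W hW
    refine ps_der_induction (C := fun W => c W (H j) = 0) hW ?_ (by simp) ?_
    · intro k hk y hy
      rcases Submodule.mem_sup.mp hy with ⟨v, hv, e, he, rfl⟩
      rcases Submodule.mem_span_singleton.mp he with ⟨t, rfl⟩
      rw [map_add, LinearMap.add_apply, hiii1 j k hk v hv, map_smul,
        LinearMap.smul_apply, hiii2 j k hk]
      simp
    · intro a b ha hb
      rw [map_add, LinearMap.add_apply, ha, hb, add_zero]
  -- Case 1 : both x, y in the upper algebra, z a generator of block j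
  have case1 : ∀ j : Fin r, ∀ x ∈ psUpper H E V j, ∀ y ∈ psUpper H E V j,
      ∀ z, (z = H j ∨ z = E j ∨ z ∈ V j) → Jc c x y z = 0 := by
    intro j x hx y hy z hz
    have hxy := ps_br_upper_upper P hx hy
    rcases hz with rfl | rfl | hzv
    · have e1 : ⁅y, H j⁆ = 0 := P.lie_upper_H j y hy
      have e2 : ⁅H j, x⁆ = 0 := by rw [lie_skew' (H j) x, P.lie_upper_H j x hx, neg_zero]
      simp only [Jc, e1, e2, map_zero, LinearMap.zero_apply, add_zero]
      exact hcDH j _ hxy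
    · have e1 : ⁅y, E j⁆ = 0 := P.lie_upper_E j y hy
      have e2 : ⁅E j, x⁆ = 0 := by rw [lie_skew' (E j) x, P.lie_upper_E j x hx, neg_zero]
      simp only [Jc, e1, e2, map_zero, LinearMap.zero_apply, add_zero]
      exact hii j _ (psDer_le_upper hxy)
    · have hyz : ⁅y, z⁆ ∈ V j := P.lie_upper_V j y hy z hzv
      have hxz : ⁅x, z⁆ ∈ V j := P.lie_upper_V j x hx z hzv
      have h1 : c ⁅x, y⁆ z = c (H j) ⁅⁅x, y⁆, z⁆ :=
        hii' j _ (psDer_le_upper hxy) z hzv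
      have h2 : c ⁅y, z⁆ x = - c (H j) ⁅x, ⁅y, z⁆⁆ := by
        rw [hanti ⁅y, z⁆ x, hii' j x hx _ hyz]
      have h3 : c ⁅z, x⁆ y = c (H j) ⁅y, ⁅x, z⁆⁆ := by
        rw [lie_skew' z x, map_neg, LinearMap.neg_apply, hanti ⁅x, z⁆ y, neg_neg,
          hii' j y hy _ hxz]
      have hJ : ⁅x, ⁅y, z⁆⁆ = ⁅⁅x, y⁆, z⁆ + ⁅y, ⁅x, z⁆⁆ := leibniz_lie x y z
      simp only [Jc, h1, h2, h3]
      rw [show ⁅⁅x,y⁆,z⁆ = ⁅x,⁅y,z⁆⁆ - ⁅y,⁅x,z⁆⁆ by rw [hJ]; abel]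
      rw [map_sub]
      ring
  -- atomic case-2 lemmas
  have JxHE : ∀ j : Fin r, ∀ x ∈ psUpper H E V j, Jc c x (H j) (E j) = 0 := by
    intro j x hx
    have e1 : ⁅x, H j⁆ = 0 := P.lie_upper_H j x hx
    have e2 : ⁅E j, x⁆ = 0 := by rw [lie_skew' (E j) x, P.lie_upper_E j x hx, neg_zero]
    have e3 : c (E j) x = 0 := by rw [hanti, hii j x hx, neg_zero]
    simp only [Jc, e1, e2, ps_br_HE P j, map_zero, LinearMap.zero_apply, map_smul,
      LinearMap.smul_apply, e3, smul_zero, add_zero, zero_add]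
  have JxHv : ∀ j : Fin r, ∀ x ∈ psUpper H E V j, ∀ v ∈ V j, Jc c x (H j) v = 0 := by
    intro j x hx v hv
    have e1 : ⁅x, H j⁆ = 0 := P.lie_upper_H j x hx
    have e2 : c ⁅H j, v⁆ x = - c (H j) ⁅x, v⁆ := by
      rw [ps_br_Hv P j hv, hanti v x, hii' j x hx v hv]
    have e3 : c ⁅v, x⁆ (H j) = c (H j) ⁅x, v⁆ := by
      rw [lie_skew' v x, map_neg, LinearMap.neg_apply, hanti ⁅x, v⁆ (H j), neg_neg]
    simp only [Jc, e1, e2, e3, map_zero, LinearMap.zero_apply, zero_add]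
    ring
  have JxEv : ∀ j : Fin r, ∀ x ∈ psUpper H E V j, ∀ v ∈ V j, Jc c x (E j) v = 0 := by
    intro j x hx v hv
    have e1 : ⁅x, E j⁆ = 0 := P.lie_upper_E j x hx
    have e2 : ⁅E j, v⁆ = 0 := by rw [lie_skew' (E j) v, P.lie_vE j v hv, neg_zero]
    have e3 : c ⁅v, x⁆ (E j) = 0 := by
      rw [lie_skew' v x, map_neg, LinearMap.neg_apply,
        hi1 j _ (P.lie_upper_V j x hx v hv), neg_zero]
    simp only [Jc, e1, e2, e3, map_zero, LinearMap.zero_apply, zero_add, add_zero]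
  have Jxvw : ∀ j : Fin r, ∀ x ∈ psUpper H E V j, ∀ v ∈ V j, ∀ w ∈ V j,
      Jc c x v w = 0 := by
    intro j x hx v hv w hw
    have h1 := hi2 j ⁅x, v⁆ (P.lie_upper_V j x hx v hv) w hw
    have h2 := hi2 j v hv ⁅x, w⁆ (P.lie_upper_V j x hx w hw)
    have h3 := P.omega_invar j x hx v hv w hw
    have h3' : ((Ω j ⁅x, v⁆ w : ℝ) : ℂ) + ((Ω j v ⁅x, w⁆ : ℝ) : ℂ) = 0 := by
      exact_mod_cast congrArg Complex.ofReal h3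
    have h4 : c ⁅v, w⁆ x = 0 := by
      rw [P.lie_vv j v hv w hw, map_smul, LinearMap.smul_apply, hanti, hii j x hx,
        neg_zero, smul_zero]
    have h5 : c ⁅w, x⁆ v = c v ⁅x, w⁆ := by
      rw [lie_skew' w x, map_neg, LinearMap.neg_apply, hanti ⁅x, w⁆ v, neg_neg]
    simp only [Complex.real_smul] at h1 h2
    simp only [Jc]
    linear_combination h4 + h5 + h1 / 2 + h2 / 2 + (c (H j) (E j) / 2) * h3'
  have case2 : ∀ j : Fin r, ∀ x ∈ psUpper H E V j, ∀ y z,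
      (y = H j ∨ y = E j ∨ y ∈ V j) → (z = H j ∨ z = E j ∨ z ∈ V j) →
      Jc c x y z = 0 := by
    intro j x hx y z hy hz
    rcases hy with rfl | rfl | hyv <;> rcases hz with rfl | rfl | hzv
    · exact Jc_deg23 c _ _
    · exact JxHE j x hx
    · exact JxHv j x hx z hzv
    · rw [Jc_swap23, JxHE j x hx, neg_zero]
    · exact Jc_deg23 c _ _
    · exact JxEv j x hx z hzv
    · rw [Jc_swap23, JxHv j x hx y hyv, neg_zero]
    · rw [Jc_swap23, JxEv j x hx y hyv, neg_zero]
    · exact Jxvw j x hx y hyv z hzv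
  -- atomic case-3 lemmas
  have J3a : ∀ j : Fin r, ∀ v ∈ V j, Jc c (H j) (E j) v = 0 := by
    intro j v hv
    have e1 : ⁅E j, v⁆ = 0 := by rw [lie_skew' (E j) v, P.lie_vE j v hv, neg_zero]
    have e2 : ⁅v, H j⁆ = -v := by rw [lie_skew' v (H j), ps_br_Hv P j hv]
    have e3 : c (E j) v = 0 := by rw [hanti, hi1 j v hv, neg_zero]
    simp only [Jc, ps_br_HE P j, e1, e2, map_smul, LinearMap.smul_apply, e3,
      smul_zero, map_zero, LinearMap.zero_apply, map_neg, LinearMap.neg_apply,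
      hi1 j v hv, neg_zero, add_zero, zero_add]
  have J3b : ∀ j : Fin r, ∀ v ∈ V j, ∀ w ∈ V j, Jc c (H j) v w = 0 := by
    intro j v hv w hw
    have h1 := hi2 j v hv w hw
    have e1 : c ⁅H j, v⁆ w = c v w := by rw [ps_br_Hv P j hv]
    have e2 : c ⁅v, w⁆ (H j) = - (Ω j v w • c (H j) (E j)) := by
      rw [P.lie_vv j v hv w hw, map_smul, LinearMap.smul_apply, hanti (E j) (H j),
        smul_neg, hanti (H j) (E j)]
    have e3 : c ⁅w, H j⁆ v = c v w := by
      rw [lie_skew' w (H j), ps_br_Hv P j hw, map_neg, LinearMap.neg_apply,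
        hanti w v, neg_neg]
    simp only [Jc, e1, e2, e3]
    simp only [Complex.real_smul] at h1 ⊢
    linear_combination h1
  have J3c : ∀ j : Fin r, ∀ v ∈ V j, ∀ w ∈ V j, Jc c (E j) v w = 0 := by
    intro j v hv w hw
    have e1 : ⁅E j, v⁆ = 0 := by rw [lie_skew' (E j) v, P.lie_vE j v hv, neg_zero]
    have e2 : ⁅w, E j⁆ = 0 := P.lie_vE j w hw
    have e3 : c (E j) (E j) = 0 := by
      have h := hanti (E j) (E j); linear_combination h / 2
    simp only [Jc, e1, e2, P.lie_vv j v hv w hw, map_zero, LinearMap.zero_apply,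
      map_smul, LinearMap.smul_apply, e3, smul_zero, add_zero, zero_add]
  have J3d : ∀ j : Fin r, ∀ v ∈ V j, ∀ w ∈ V j, ∀ u ∈ V j, Jc c v w u = 0 := by
    intro j v hv w hw u hu
    have e : ∀ a ∈ V j, c (E j) a = 0 := fun a ha => by rw [hanti, hi1 j a ha, neg_zero]
    simp only [Jc, P.lie_vv j v hv w hw, P.lie_vv j w hw u hu, P.lie_vv j u hu v hv,
      map_smul, LinearMap.smul_apply, e u hu, e v hv, e w hw, smul_zero, add_zero]
  have case3 : ∀ j : Fin r, ∀ x y z,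
      (x = H j ∨ x = E j ∨ x ∈ V j) → (y = H j ∨ y = E j ∨ y ∈ V j) →
      (z = H j ∨ z = E j ∨ z ∈ V j) → Jc c x y z = 0 := by
    intro j x y z hx hy hz
    rcases hx with rfl | rfl | hxv <;> rcases hy with rfl | rfl | hyv <;>
      rcases hz with rfl | rfl | hzv
    · exact Jc_deg12 c (H j) (H j)
    · exact Jc_deg12 c (H j) (E j)
    · exact Jc_deg12 c (H j) z
    · exact Jc_deg13 c (H j) (E j)
    · exact Jc_deg23 c (H j) (E j)
    · exact J3a j _ hzv
    · exact Jc_deg13 c (H j) y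
    · rw [Jc_swap23, J3a j _ hyv, neg_zero]
    · exact J3b j _ hyv _ hzv
    · exact Jc_deg23 c (E j) (H j)
    · exact Jc_deg13 c (E j) (H j)
    · rw [Jc_swap12, J3a j _ hzv, neg_zero]
    · exact Jc_deg12 c (E j) (H j)
    · exact Jc_deg12 c (E j) (E j)
    · exact Jc_deg12 c (E j) z
    · rw [Jc_swap13, Jc_swap23, neg_neg, J3a j _ hyv]
    · exact Jc_deg13 c (E j) y
    · exact J3c j _ hyv _ hzv
    · exact Jc_deg23 c x (H j)
    · rw [Jc_swap12, Jc_swap23, neg_neg, J3a j _ hxv]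
    · rw [Jc_swap12, J3b j _ hxv _ hzv, neg_zero]
    · rw [Jc_swap13, J3a j _ hxv, neg_zero]
    · exact Jc_deg23 c x (E j)
    · rw [Jc_swap12, J3c j _ hxv _ hzv, neg_zero]
    · rw [Jc_cyc, Jc_cyc, J3b j _ hxv _ hyv]
    · rw [Jc_cyc, Jc_cyc, J3c j _ hxv _ hyv]
    · exact J3d j _ hxv _ hyv _ hzv
  have genMem : ∀ (k : Fin r) (g : 𝔰), (g = H k ∨ g = E k ∨ g ∈ V k) →
      g ∈ psBlock H E V k := by
    rintro k g (rfl | rfl | hg)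
    exacts [psH_mem k, psE_mem k, psV_le k hg]
  have genGe : ∀ (a k : Fin r), a ≤ k → ∀ g, (g = H k ∨ g = E k ∨ g ∈ V k) →
      (g ∈ psUpper H E V a ∨ (g = H a ∨ g = E a ∨ g ∈ V a)) := by
    intro a k hak g hg
    rcases lt_or_eq_of_le hak with h | h
    · exact Or.inl (psBlock_le_upper h (genMem k g hg))
    · subst h; exact Or.inr hg
  have caseM : ∀ j : Fin r, ∀ z, (z = H j ∨ z = E j ∨ z ∈ V j) →
      ∀ x, (x ∈ psUpper H E V j ∨ (x = H j ∨ x = E j ∨ x ∈ V j)) →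
      ∀ y, (y ∈ psUpper H E V j ∨ (y = H j ∨ y = E j ∨ y ∈ V j)) →
      Jc c x y z = 0 := by
    intro j z hz x hx y hy
    rcases hx with hx | hx <;> rcases hy with hy | hy
    · exact case1 j x hx y hy z hz
    · exact case2 j x hx y z hy hz
    · rw [Jc_swap12, case2 j y hy x z hx hz, neg_zero]
    · exact case3 j x y z hx hy hz
  have Jgen : ∀ x y z : 𝔰,
      (∃ a : Fin r, x = H a ∨ x = E a ∨ x ∈ V a) →
      (∃ b : Fin r, y = H b ∨ y = E b ∨ y ∈ V b) →
      (∃ d : Fin r, z = H d ∨ z = E d ∨ z ∈ V d) → Jc c x y z = 0 := by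
    rintro x y z ⟨a, hxa⟩ ⟨b, hyb⟩ ⟨d, hzd⟩
    rcases le_total a b with hab | hab
    · rcases le_total a d with had | had
      · rw [Jc_cyc]
        exact caseM a x hxa y (genGe a b hab y hyb) z (genGe a d had z hzd)
      · exact caseM d z hzd x (genGe d a had x hxa) y (genGe d b (had.trans hab) y hyb)
    · rcases le_total b d with hbd | hbd
      · rw [Jc_swap23, caseM b y hyb x (genGe b a hab x hxa) z (genGe b d hbd z hzd),
          neg_zero]
      · exact caseM d z hzd x (genGe d a (hbd.trans hab) x hxa) y (genGe d b hbd y hyb)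
  set S : Set 𝔰 := {g : 𝔰 | ∃ j : Fin r, g = H j ∨ g = E j ∨ g ∈ V j} with hSdef
  have hspan : Submodule.span ℝ S = ⊤ := by
    rw [eq_top_iff, ← P.total]
    refine iSup_le fun j => ?_
    refine sup_le (sup_le ?_ ?_) ?_
    · exact Submodule.span_le.mpr
        (Set.singleton_subset_iff.mpr (Submodule.subset_span ⟨j, Or.inl rfl⟩))
    · exact fun g hg => Submodule.subset_span ⟨j, Or.inr (Or.inr hg)⟩
    · exact Submodule.span_le.mpr
        (Set.singleton_subset_iff.mpr (Submodule.subset_span ⟨j, Or.inr (Or.inl rfl)⟩))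
  have hS : ∀ w : 𝔰, w ∈ Submodule.span ℝ S := by
    intro w; rw [hspan]; exact Submodule.mem_top
  have step1 : ∀ x ∈ S, ∀ y ∈ S, ∀ w : 𝔰, Jc c x y w = 0 := by
    intro x hx y hy w
    refine Submodule.span_induction (p := fun w _ => Jc c x y w = 0) ?_ ?_ ?_ ?_ (hS w)
    · intro z hz; exact Jgen x y z hx hy hz
    · exact Jc_zero3 c x y
    · intro a b _ _ ha hb; rw [Jc_add3, ha, hb, add_zero]
    · intro t a _ ha; rw [Jc_smul3, ha, smul_zero]
  have step2 : ∀ x ∈ S, ∀ y w : 𝔰, Jc c x y w = 0 := by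
    intro x hx y w
    refine Submodule.span_induction (p := fun y _ => Jc c x y w = 0) ?_ ?_ ?_ ?_ (hS y)
    · intro z hz; exact step1 x hx z hz w
    · exact Jc_zero2 c x w
    · intro a b _ _ ha hb; rw [Jc_add2, ha, hb, add_zero]
    · intro t a _ ha; rw [Jc_smul2, ha, smul_zero]
  have step3 : ∀ x y w : 𝔰, Jc c x y w = 0 := by
    intro x y w
    refine Submodule.span_induction (p := fun x _ => Jc c x y w = 0) ?_ ?_ ?_ ?_ (hS x)
    · intro z hz; exact step2 z hz y w
    · exact Jc_zero1 c y w
    · intro a b _ _ ha hb; rw [Jc_add1, ha, hb, add_zero]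
    · intro t a _ ha; rw [Jc_smul1, ha, smul_zero]
  have h := step3 X Y Z
  simpa only [Jc] using h

end PSBackward

/-- An antisymmetric `ℝ`-bilinear map `c : 𝔰 × 𝔰 → ℂ` is a Chevalley–Eilenberg
2-cocycle (trivial coefficients) if and only if it satisfies conditions (i), (ii), (ii'),
(iii) of Lemma 3.3 of the paper. -/
theorem statement8 {r : ℕ} (𝔰 : Type) [LieRing 𝔰] [LieAlgebra ℝ 𝔰] [Module.Finite ℝ 𝔰]
    (H E : Fin r → 𝔰) (V : Fin r → Submodule ℝ 𝔰) (Ω : Fin r → 𝔰 →ₗ[ℝ] 𝔰 →ₗ[ℝ] ℝ)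
    (P : IsPSAlgebra H E V Ω)
    (c : 𝔰 →ₗ[ℝ] 𝔰 →ₗ[ℝ] ℂ) (hanti : ∀ X Y : 𝔰, c X Y = - c Y X) :
    (∀ X Y Z : 𝔰, c ⁅X, Y⁆ Z + c ⁅Y, Z⁆ X + c ⁅Z, X⁆ Y = 0) ↔
      -- (i)
      ((∀ j, ∀ v ∈ V j, c v (E j) = 0) ∧
       (∀ j, ∀ v ∈ V j, ∀ v' ∈ V j, (2 : ℂ) * c v v' = Ω j v v' • c (H j) (E j)) ∧
       -- (ii)
       (∀ j, ∀ X ∈ psUpper H E V j, c X (E j) = 0) ∧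
       -- (ii')
       (∀ j, ∀ X ∈ psUpper H E V j, ∀ v ∈ V j, c X v = c (H j) ⁅X, v⁆) ∧
       -- (iii)
       (∀ j k : Fin r, j < k → ∀ v ∈ V k, c v (H j) = 0) ∧
       (∀ j k : Fin r, j < k → c (E k) (H j) = 0)) := by
  constructor
  · intro hco
    refine ⟨?_, ?_, ?_, ?_, ?_, ?_⟩
    · -- (i1)
      intro j v hv
      have h := hco (H j) v (E j)
      rw [ps_br_Hv P j hv, P.lie_vE j v hv, lie_skew' (E j) (H j), ps_br_HE P j] at h
      simp only [map_zero, LinearMap.zero_apply, map_neg, LinearMap.neg_apply, map_smul,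
        LinearMap.smul_apply, add_zero, Complex.real_smul] at h
      rw [hanti (E j) v] at h
      push_cast at h
      linear_combination h / 3
    · -- (i2)
      intro j v hv v' hv'
      have h := hco (H j) v v'
      rw [ps_br_Hv P j hv, P.lie_vv j v hv v' hv', lie_skew' v' (H j), ps_br_Hv P j hv'] at h
      simp only [map_smul, LinearMap.smul_apply, map_neg, LinearMap.neg_apply,
        Complex.real_smul] at h
      rw [hanti (E j) (H j), hanti v' v] at h
      rw [Complex.real_smul]
      linear_combination h
    · -- (ii)
      intro j X hX
      have h := hco X (H j) (E j)
      rw [P.lie_upper_H j X hX, ps_br_HE P j, lie_skew' (E j) X, P.lie_upper_E j X hX] at h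
      simp only [map_zero, LinearMap.zero_apply, neg_zero, map_smul, LinearMap.smul_apply,
        zero_add, add_zero, Complex.real_smul] at h
      rw [hanti (E j) X] at h
      push_cast at h
      linear_combination -h / 2
    · -- (ii')
      intro j X hX v hv
      have h := hco X (H j) v
      rw [P.lie_upper_H j X hX, ps_br_Hv P j hv, lie_skew' v X] at h
      simp only [map_zero, LinearMap.zero_apply, map_neg, LinearMap.neg_apply,
        zero_add] at h
      rw [hanti v X, hanti ⁅X, v⁆ (H j)] at h
      linear_combination -h
    · -- (iii1)
      intro j k hjk v hv
      have hvu : v ∈ psUpper H E V j := psBlock_le_upper hjk (psV_le k hv)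
      have hHu : H k ∈ psUpper H E V j := psBlock_le_upper hjk (psH_mem k)
      have h := hco (H k) v (H j)
      rw [ps_br_Hv P k hv, P.lie_upper_H j v hvu, lie_skew' (H j) (H k),
        P.lie_upper_H j (H k) hHu] at h
      simp only [map_zero, LinearMap.zero_apply, neg_zero, add_zero] at h
      exact h
    · -- (iii2)
      intro j k hjk
      have hEu : E k ∈ psUpper H E V j := psBlock_le_upper hjk (psE_mem k)
      have hHu : H k ∈ psUpper H E V j := psBlock_le_upper hjk (psH_mem k)
      have h := hco (H k) (E k) (H j)
      rw [ps_br_HE P k, P.lie_upper_H j (E k) hEu, lie_skew' (H j) (H k),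
        P.lie_upper_H j (H k) hHu] at h
      simp only [map_zero, LinearMap.zero_apply, neg_zero, add_zero, map_smul,
        LinearMap.smul_apply, Complex.real_smul] at h
      push_cast at h
      linear_combination h / 2
  · rintro ⟨hi1, hi2, hii, hii', hiii1, hiii2⟩ X Y Z
    exact ps_backward P c hanti hi1 hi2 hii hii' hiii1 hiii2 X Y Z
end
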